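/- arXiv:1310.3927 — 4 statements merged into one kernel-verified Lean document; each statement's English description precedes it below -/
import Mathlib

section
/- Let ρ:(0,∞)→(0,∞) be continuous, non-decreasing, with ∫_{0+} 1/ρ(s) ds = +∞. If f:[0,∞)→[0,∞) is measurable with f(0) = 0 and f(t) ≤ ∫_0^t ρ(f(s)) ds for all t ≥ 0, then f(t) = 0 for all t ≥ 0. -/
open Set MeasureTheory Filter

/-- Degenerate Bihari/Osgood: if `f(0) = 0` and `f(t) ≤ ∫_0^t ρ(f(s)) ds` with
`∫_{0+} ds/ρ(s) = ∞`, then `f ≡ 0`. -/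
theorem bihari_zero (ρ : ℝ → ℝ)
    (hρc : ContinuousOn ρ (Ioi 0))
    (hρpos : ∀ r > 0, 0 < ρ r)
    (hρnonneg : ∀ r ≥ 0, 0 ≤ ρ r)
    (hρmono : MonotoneOn ρ (Ici 0))
    (hOsgood : Tendsto (fun ε => ∫ u in ε..(1:ℝ), 1 / ρ u) (nhdsWithin 0 (Ioi 0)) atTop)
    (f : ℝ → ℝ) (hfm : Measurable f) (hfnonneg : ∀ t ≥ 0, 0 ≤ f t)
    (hf0 : f 0 = 0)
    (hint : ∀ a b : ℝ, 0 ≤ a → IntervalIntegrable (fun s => ρ (f s)) volume a b)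
    (hf : ∀ t ≥ 0, f t ≤ ∫ s in (0:ℝ)..t, ρ (f s)) :
    ∀ t ≥ 0, f t = 0 := by
  classical
  -- monotone extension of ρ
  set ρ' : ℝ → ℝ := fun x => ρ (max x 0) with hρ'def
  have hρ'mono : Monotone ρ' := fun x y h =>
    hρmono (le_max_right x 0) (le_max_right y 0) (max_le_max h le_rfl)
  have hρ'eq : ∀ x : ℝ, 0 ≤ x → ρ' x = ρ x := fun x hx => by
    simp only [ρ', max_eq_left hx]
  -- the integrand, extended by a constant on negatives
  set φ : ℝ → ℝ := fun s => if 0 ≤ s then ρ (f s) else ρ 0 with hφdef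
  have hφnonneg : ∀ s, 0 ≤ φ s := by
    intro s
    by_cases h : 0 ≤ s
    · simp only [φ, if_pos h]; exact hρnonneg _ (hfnonneg s h)
    · simp only [φ, if_neg h]; exact hρnonneg 0 le_rfl
  have hφint0 : ∀ c : ℝ, IntervalIntegrable φ volume 0 c := by
    intro c
    rcases le_or_gt 0 c with hc | hc
    · have h1 := hint 0 c le_rfl
      rw [intervalIntegrable_iff] at h1 ⊢
      refine h1.congr_fun ?_ measurableSet_uIoc
      intro s hs
      rw [uIoc_of_le hc] at hs
      simp only [φ, if_pos hs.1.le]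
    · rw [intervalIntegrable_iff]
      have hconst : IntegrableOn (fun _ : ℝ => ρ 0) (Set.uIoc (0:ℝ) c) volume :=
        (integrableOn_const_iff).mpr (Or.inr measure_Ioc_lt_top)
      refine hconst.congr_fun ?_ measurableSet_uIoc
      intro s hs
      rw [uIoc_of_ge hc.le] at hs
      rcases lt_or_eq_of_le hs.2 with h | h
      · simp only [φ, if_neg (not_le.mpr h)]
      · simp only [φ, h, if_pos le_rfl, hf0]
  have hφint : ∀ a b : ℝ, IntervalIntegrable φ volume a b := fun a b =>
    ((hφint0 a).symm.trans (hφint0 b))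
  set F : ℝ → ℝ := fun t => ∫ s in (0:ℝ)..t, φ s with hFdef
  have hFcont : Continuous F := intervalIntegral.continuous_primitive hφint 0
  have hFrw : ∀ t : ℝ, 0 ≤ t → F t = ∫ s in (0:ℝ)..t, ρ (f s) := by
    intro t ht
    refine intervalIntegral.integral_congr ?_
    intro s hs
    rw [uIcc_of_le ht] at hs
    simp only [φ, if_pos hs.1]
  have hF0 : F 0 = 0 := intervalIntegral.integral_same
  have hFmono : Monotone F := by
    intro a b hab
    have hadd := intervalIntegral.integral_add_adjacent_intervals (hφint 0 a) (hφint a b)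
    have h2 : 0 ≤ ∫ s in a..b, φ s :=
      intervalIntegral.integral_nonneg hab fun u _ => hφnonneg u
    simp only [F]
    linarith [hadd]
  have hFnonneg : ∀ s : ℝ, 0 ≤ s → 0 ≤ F s := fun s hs => hF0 ▸ hFmono hs
  have hfF : ∀ s : ℝ, 0 ≤ s → f s ≤ F s := fun s hs => (hf s hs).trans_eq (hFrw s hs).symm
  intro t0 ht0
  have hFz : F t0 = 0 := by
    by_contra hne
    have hpos : 0 < F t0 := lt_of_le_of_ne (hFnonneg t0 ht0) (Ne.symm hne)
    -- last zero of F before t0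
    set S : Set ℝ := Icc 0 t0 ∩ F ⁻¹' {0} with hSdef
    have hS0 : (0:ℝ) ∈ S := ⟨⟨le_rfl, ht0⟩, by simp [hF0]⟩
    have hScpt : IsCompact S :=
      isCompact_Icc.inter_right (isClosed_singleton.preimage hFcont)
    set t1 : ℝ := sSup S with ht1def
    have ht1S : t1 ∈ S := hScpt.sSup_mem ⟨0, hS0⟩
    have ht1nn : 0 ≤ t1 := ht1S.1.1
    have hFt1 : F t1 = 0 := ht1S.2
    have ht1lt : t1 < t0 := lt_of_le_of_ne ht1S.1.2 (fun h : t1 = t0 => hne (h ▸ hFt1))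
    have hFposOn : ∀ t ∈ Ioc t1 t0, 0 < F t := by
      intro t ht
      rcases (hFnonneg t (ht1nn.trans ht.1.le)).lt_or_eq with h | h
      · exact h
      · exact absurd (le_csSup hScpt.bddAbove ⟨⟨ht1nn.trans ht.1.le, ht.2⟩, h.symm⟩)
          (not_le.mpr ht.1)
    -- comparison function K
    set g : ℝ → ℝ := fun s => ρ' (F s) with hgdef
    have hgmono : Monotone g := fun a b h => hρ'mono (hFmono h)
    have hgint : ∀ a b : ℝ, IntervalIntegrable g volume a b := fun a b =>
      hgmono.intervalIntegrable
    have hgnonneg : ∀ s, 0 ≤ g s := fun s => hρnonneg _ (le_max_right _ _)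
    have hgF : ∀ s : ℝ, 0 ≤ s → g s = ρ (F s) := fun s hs => hρ'eq _ (hFnonneg s hs)
    set K : ℝ → ℝ := fun t => ∫ s in t1..t, g s with hKdef
    have hFK : ∀ t : ℝ, t1 ≤ t → t ≤ t0 → F t ≤ K t := by
      intro t h1 h2
      have hadd : F t1 + ∫ s in t1..t, φ s = F t :=
        intervalIntegral.integral_add_adjacent_intervals (hφint 0 t1) (hφint t1 t)
      have hmono : (∫ s in t1..t, φ s) ≤ ∫ s in t1..t, g s := by
        apply intervalIntegral.integral_mono_on h1 (hφint t1 t) (hgint t1 t)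
        intro s hs
        have hs0 : 0 ≤ s := ht1nn.trans hs.1
        have h3 := hρmono (mem_Ici.mpr (hfnonneg s hs0)) (mem_Ici.mpr (hFnonneg s hs0))
          (hfF s hs0)
        calc φ s = ρ (f s) := if_pos hs0
          _ ≤ ρ (F s) := h3
          _ = g s := (hgF s hs0).symm
      simp only [K]
      linarith [hadd]
    have hKpos : ∀ t ∈ Ioc t1 t0, 0 < K t := fun t ht =>
      (hFposOn t ht).trans_le (hFK t ht.1.le ht.2)
    have hKderiv : ∀ t ∈ Ioc t1 t0, HasDerivAt K (g t) t := by
      intro t ht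
      have hFt : 0 < F t := hFposOn t ht
      have h1 : ContinuousAt ρ (F t) := hρc.continuousAt (Ioi_mem_nhds hFt)
      have h2 : ContinuousAt ρ' (F t) := by
        apply h1.congr
        filter_upwards [Ioi_mem_nhds hFt] with x hx
        exact (hρ'eq x hx.le).symm
      have hcg : ContinuousAt g t := h2.comp hFcont.continuousAt
      exact intervalIntegral.integral_hasDerivAt_right (hgint t1 t)
        ((hρ'mono.measurable.comp hFcont.measurable).stronglyMeasurable.stronglyMeasurableAtFilter)
        hcg
    -- the Osgood primitive
    set Ψ : ℝ → ℝ := fun y => ∫ u in y..(1:ℝ), 1 / ρ u with hΨdef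
    have hinv : ContinuousOn (fun u => 1 / ρ u) (Ioi 0) :=
      continuousOn_const.div hρc fun x hx => (hρpos x hx).ne'
    have hΨd : ∀ x : ℝ, 0 < x → HasDerivAt Ψ (-(1 / ρ x)) x := by
      intro x hx
      have hsub : uIcc (1:ℝ) x ⊆ Ioi 0 := by
        intro u hu
        have h1 : min (1:ℝ) x ≤ u := hu.1
        have h2 : 0 < min (1:ℝ) x := lt_min one_pos hx
        exact h2.trans_le h1
      have hii : IntervalIntegrable (fun u => 1 / ρ u) volume 1 x :=
        (hinv.mono hsub).intervalIntegrable
      have hP : HasDerivAt (fun y => ∫ u in (1:ℝ)..y, 1 / ρ u) (1 / ρ x) x :=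
        intervalIntegral.integral_hasDerivAt_right hii
          (AEStronglyMeasurable.stronglyMeasurableAtFilter_of_mem
            (hinv.aestronglyMeasurable measurableSet_Ioi) (Ioi_mem_nhds hx))
          (hinv.continuousAt (Ioi_mem_nhds hx))
      have heq : Ψ = fun y => -∫ u in (1:ℝ)..y, 1 / ρ u := by
        funext y
        simp only [Ψ]
        rw [intervalIntegral.integral_symm]
      rw [heq]
      exact hP.neg
    -- MVT bound
    have hbound : ∀ s : ℝ, t1 < s → s < t0 → Ψ (K s) ≤ Ψ (K t0) + (t0 - t1) := by
      intro s hs1 hs2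
      have hder : ∀ x ∈ Icc s t0,
          HasDerivWithinAt (Ψ ∘ K) (-(1 / ρ (K x)) * g x) (Icc s t0) x := by
        intro x hx
        have hxI : x ∈ Ioc t1 t0 := ⟨hs1.trans_le hx.1, hx.2⟩
        exact ((hΨd (K x) (hKpos x hxI)).comp x (hKderiv x hxI)).hasDerivWithinAt
      have hbd : ∀ x ∈ Icc s t0, ‖-(1 / ρ (K x)) * g x‖ ≤ 1 := by
        intro x hx
        have hxI : x ∈ Ioc t1 t0 := ⟨hs1.trans_le hx.1, hx.2⟩
        have hx0 : 0 ≤ x := ht1nn.trans hxI.1.le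
        have hKx : 0 < K x := hKpos x hxI
        have hρK : 0 < ρ (K x) := hρpos _ hKx
        have hle : g x ≤ ρ (K x) := by
          rw [hgF x hx0]
          exact hρmono (mem_Ici.mpr (hFnonneg x hx0)) (mem_Ici.mpr hKx.le)
            (hFK x hxI.1.le hxI.2)
        have hgx : 0 ≤ g x := hgnonneg x
        have habs : ‖-(1 / ρ (K x)) * g x‖ = g x / ρ (K x) := by
          rw [Real.norm_eq_abs, abs_mul, abs_neg, abs_of_nonneg (le_of_lt (by positivity)),
            abs_of_nonneg hgx, one_div_mul_eq_div]
        rw [habs]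
        exact (div_le_one hρK).mpr hle
      have key : ‖(Ψ ∘ K) t0 - (Ψ ∘ K) s‖ ≤ 1 * ‖t0 - s‖ :=
        Convex.norm_image_sub_le_of_norm_hasDerivWithin_le hder hbd (convex_Icc s t0)
          ⟨le_rfl, hs2.le⟩ ⟨hs2.le, le_rfl⟩
      have h1 : Ψ (K s) - Ψ (K t0) ≤ ‖(Ψ ∘ K) t0 - (Ψ ∘ K) s‖ := by
        rw [Real.norm_eq_abs]
        have := neg_abs_le ((Ψ ∘ K) t0 - (Ψ ∘ K) s)
        simp only [Function.comp_apply] at this ⊢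
        linarith [abs_nonneg ((Ψ (K t0)) - Ψ (K s)), neg_abs_le (Ψ (K t0) - Ψ (K s))]
      have h2 : ‖t0 - s‖ = t0 - s := by
        rw [Real.norm_eq_abs, abs_of_pos (by linarith)]
      rw [h2] at key
      linarith [key, h1]
    -- limit to contradiction
    set l : Filter ℝ := nhdsWithin t1 (Ioo t1 t0) with hldef
    have hlne : l.NeBot := by
      apply mem_closure_iff_nhdsWithin_neBot.mp
      rw [closure_Ioo ht1lt.ne]
      exact ⟨le_rfl, ht1lt.le⟩
    have hKle : ∀ t ∈ Ioo t1 t0, K t ≤ (t - t1) * g t0 := by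
      intro t ht
      have hmono : (∫ s in t1..t, g s) ≤ ∫ s in t1..t, g t0 :=
        intervalIntegral.integral_mono_on ht.1.le (hgint t1 t) intervalIntegrable_const
          fun s hs => hgmono (hs.2.trans ht.2.le)
      simpa [intervalIntegral.integral_const, smul_eq_mul] using hmono
    have hK0 : Tendsto K l (nhds 0) := by
      apply squeeze_zero'
      · filter_upwards [self_mem_nhdsWithin] with t ht
        exact intervalIntegral.integral_nonneg ht.1.le fun u _ => hgnonneg u
      · filter_upwards [self_mem_nhdsWithin] with t ht
        exact hKle t ht
      · have hc : Tendsto (fun t => (t - t1) * g t0) (nhds t1) (nhds ((t1 - t1) * g t0)) :=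
          Continuous.tendsto ((continuous_id.sub continuous_const).mul continuous_const) t1
        simpa using hc.mono_left nhdsWithin_le_nhds
    have hKt : Tendsto K l (nhdsWithin 0 (Ioi 0)) := by
      rw [tendsto_nhdsWithin_iff]
      refine ⟨hK0, ?_⟩
      filter_upwards [self_mem_nhdsWithin] with t ht
      exact hKpos t ⟨ht.1, ht.2.le⟩
    have hTop : Tendsto (fun t => Ψ (K t)) l atTop := hOsgood.comp hKt
    obtain ⟨s, hsb, hsm⟩ :=
      ((hTop.eventually_gt_atTop (Ψ (K t0) + (t0 - t1))).and self_mem_nhdsWithin).exists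
    exact absurd (hbound s hsm.1 hsm.2) (not_le.mpr hsb)
  have h1 : f t0 ≤ 0 := (hfF t0 ht0).trans_eq hFz
  exact le_antisymm h1 (hfnonneg t0 ht0)
end

section
/- Let ρ ∈ 𝒰 and let b, b̃: ℝ^d → ℝ^d be continuous, both satisfying the one-sided condition (x_j - y_j)(b_j(x) - b_j(y)) ≤ |x_j - y_j| ρ(‖x-y‖₁) (and similarly for b̃), and let w: [0,∞) → ℝ^d be any fixed continuous path. Suppose X, X̃: [0,∞) → ℝ^d are continuous and solve X_t = x + ∫_0^t b(X_s) ds + w_t and X̃_t = x + ∫_0^t b̃(X̃_s) ds + w_t. If δ := sup_{z} ‖b(z) - b̃(z)‖₁ restricted to a set containing the ranges of X, X̃ up to time T satisfies the bound ‖X_t - X̃_t‖₁ ≤ d∫_0^t ρ(‖X_s - X̃_s‖₁) ds + δ t for t ≤ T, then ‖X_t - X̃_t‖₁ ≤ G_ρ^{-1}(G_ρ(δ t) + d t) for all t ≤ T; in particular if b̃ = b (δ = 0) the two solutions coincide, giving pathwise uniqueness for the ODE with additive forcing. -/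
open Set MeasureTheory Filter

/-- `G_ρ(r) = ∫_1^r du/ρ(u)`. -/
noncomputable def Grho (ρ : ℝ → ℝ) (r : ℝ) : ℝ := ∫ u in (1:ℝ)..r, 1 / ρ u

/-- Generalized inverse of `G_ρ`, with the convention `G_ρ⁻¹(-∞) = 0`. -/
noncomputable def GrhoInv (ρ : ℝ → ℝ) (s : ℝ) : ℝ := sInf {r : ℝ | 0 < r ∧ s ≤ Grho ρ r}

section aux
variable {ρ : ℝ → ℝ}

lemma oneDivRho_contOn (hρc : ContinuousOn ρ (Ioi 0)) (hρpos : ∀ r > 0, 0 < ρ r) :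
    ContinuousOn (fun u => 1 / ρ u) (Ioi 0) :=
  continuousOn_const.div hρc (fun x hx => (hρpos x hx).ne')

lemma grho_integrable (hρc : ContinuousOn ρ (Ioi 0)) (hρpos : ∀ r > 0, 0 < ρ r)
    {a b : ℝ} (ha : 0 < a) (hb : 0 < b) :
    IntervalIntegrable (fun u => 1 / ρ u) MeasureTheory.volume a b := by
  apply ContinuousOn.intervalIntegrable
  apply (oneDivRho_contOn hρc hρpos).mono
  intro x hx
  exact lt_of_lt_of_le (lt_min ha hb) hx.1

lemma grho_sub (hρc : ContinuousOn ρ (Ioi 0)) (hρpos : ∀ r > 0, 0 < ρ r)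
    {a b : ℝ} (ha : 0 < a) (hb : 0 < b) :
    Grho ρ b = Grho ρ a + ∫ u in a..b, 1 / ρ u :=
  (intervalIntegral.integral_add_adjacent_intervals
    (grho_integrable hρc hρpos one_pos ha) (grho_integrable hρc hρpos ha hb)).symm

lemma grho_strictMono (hρc : ContinuousOn ρ (Ioi 0)) (hρpos : ∀ r > 0, 0 < ρ r)
    {a b : ℝ} (ha : 0 < a) (hab : a < b) : Grho ρ a < Grho ρ b := by
  rw [grho_sub hρc hρpos ha (ha.trans hab)]
  have hpos := intervalIntegral.intervalIntegral_pos_of_pos_on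
    (grho_integrable hρc hρpos ha (ha.trans hab))
    (fun x hx => one_div_pos.mpr (hρpos x (ha.trans hx.1))) hab
  linarith

lemma grho_mono (hρc : ContinuousOn ρ (Ioi 0)) (hρpos : ∀ r > 0, 0 < ρ r)
    {a b : ℝ} (ha : 0 < a) (hab : a ≤ b) : Grho ρ a ≤ Grho ρ b := by
  rcases eq_or_lt_of_le hab with h | h
  · rw [h]
  · exact (grho_strictMono hρc hρpos ha h).le

lemma grho_le_imp (hρc : ContinuousOn ρ (Ioi 0)) (hρpos : ∀ r > 0, 0 < ρ r)
    {a b : ℝ} (ha : 0 < a) (hb : 0 < b) (h : Grho ρ a ≤ Grho ρ b) : a ≤ b := by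
  by_contra hlt
  exact absurd h (not_le.mpr (grho_strictMono hρc hρpos hb (not_le.mp hlt)))

lemma grho_unbounded (hρc : ContinuousOn ρ (Ioi 0)) (hρpos : ∀ r > 0, 0 < ρ r)
    (hρlin : ∃ C > 0, ∀ r > 0, ρ r ≤ C * (1 + r)) (c : ℝ) :
    ∃ r, 0 < r ∧ c ≤ Grho ρ r := by
  obtain ⟨C, hC, hlin⟩ := hρlin
  set r : ℝ := 2 * Real.exp (C * (|c| + 1)) - 1 with hr_def
  have hexp : (1:ℝ) ≤ Real.exp (C * (|c| + 1)) :=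
    Real.one_le_exp (by positivity)
  have hr1 : (1:ℝ) ≤ r := by simp only [hr_def]; linarith
  have h0r : (0:ℝ) < r := lt_of_lt_of_le one_pos hr1
  refine ⟨r, h0r, ?_⟩
  have hsub : uIcc (1:ℝ) r ⊆ Ioi 0 := by
    intro x hx
    exact lt_of_lt_of_le (lt_min one_pos h0r) hx.1
  have hcont2 : ContinuousOn (fun u : ℝ => 1 / (C * (1 + u))) (uIcc 1 r) := by
    apply continuousOn_const.div (by fun_prop)
    intro x hx
    have hx0 : (0:ℝ) < x := hsub hx
    positivity
  have hint2 : IntervalIntegrable (fun u : ℝ => 1 / (C * (1 + u))) volume 1 r :=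
    hcont2.intervalIntegrable
  have hmono : ∫ u in (1:ℝ)..r, 1 / (C * (1 + u)) ≤ Grho ρ r := by
    apply intervalIntegral.integral_mono_on hr1 hint2
      (grho_integrable hρc hρpos one_pos h0r)
    intro u hu
    have hu0 : (0:ℝ) < u := lt_of_lt_of_le one_pos hu.1
    exact one_div_le_one_div_of_le (hρpos u hu0) (hlin u hu0)
  have hcalc : ∫ u in (1:ℝ)..r, 1 / (C * (1 + u)) = |c| + 1 := by
    have h1 : ∀ u : ℝ, 1 / (C * (1 + u)) = C⁻¹ * (1 + u)⁻¹ := by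
      intro u; rw [one_div, mul_inv]
    simp_rw [h1]
    rw [intervalIntegral.integral_const_mul]
    have h2 : ∫ u in (1:ℝ)..r, (1 + u)⁻¹ = ∫ x in (1+1:ℝ)..(r+1), x⁻¹ := by
      have := intervalIntegral.integral_comp_add_right (a := (1:ℝ)) (b := r)
        (fun x : ℝ => x⁻¹) 1
      simpa [add_comm] using this
    rw [h2, integral_inv (by
      intro hx
      have : (0:ℝ) < 1 + 1 := by norm_num
      have h2r : (0:ℝ) < r + 1 := by linarith
      exact absurd hx.1 (by simp [lt_min this h2r, not_le]; linarith [lt_min this h2r]))]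
    have : (r + 1) / (1 + 1) = Real.exp (C * (|c| + 1)) := by
      simp only [hr_def]; ring_nf
    rw [this, Real.log_exp]
    field_simp
  rw [hcalc] at hmono
  have := le_abs_self c
  linarith

end aux

lemma bihari_core {ρ : ℝ → ℝ} (hρc : ContinuousOn ρ (Ioi 0))
    (hρpos : ∀ r > 0, 0 < ρ r) (hρmono : MonotoneOn ρ (Ici 0))
    (d : ℕ) (u : ℝ → ℝ) (hu : Continuous u) (hunn : ∀ t, 0 ≤ u t)
    (t0 δ : ℝ) (ht0 : 0 < t0) (hδ : 0 < δ)
    (hub : ∀ t ∈ Icc (0:ℝ) t0, u t ≤ (d:ℝ) * (∫ s in (0:ℝ)..t, ρ (u s)) + δ * t) :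
    ∃ W, u t0 ≤ W ∧ 0 < W ∧ Grho ρ W ≤ Grho ρ (δ * t0) + (d:ℝ) * t0 := by
  set η : ℝ := δ * t0 with hη_def
  have hη : 0 < η := mul_pos hδ ht0
  set g : ℝ → ℝ := fun s => ρ (max (u s) η) with hg_def
  have hmax_pos : ∀ s : ℝ, (0:ℝ) < max (u s) η := fun s =>
    lt_of_lt_of_le hη (le_max_right _ _)
  have hg_pos : ∀ s, 0 < g s := fun s => hρpos _ (hmax_pos s)
  have hgc : Continuous g := by
    have : Continuous (ρ ∘ fun s => max (u s) η) :=
      hρc.comp_continuous (hu.max continuous_const) (fun s => hmax_pos s)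
    exact this
  set F : ℝ → ℝ := fun t => ∫ s in (0:ℝ)..t, g s with hF_def
  have hF : ∀ t, HasDerivAt F (g t) t := fun t =>
    (hgc.integral_hasStrictDerivAt 0 t).hasDerivAt
  set W : ℝ → ℝ := fun t => η + (d:ℝ) * F t with hW_def
  have hw' : ∀ t, HasDerivAt W ((d:ℝ) * g t) t := fun t =>
    ((hF t).const_mul _).const_add _
  have hFnn : ∀ t ∈ Icc (0:ℝ) t0, 0 ≤ F t := fun t ht =>
    intervalIntegral.integral_nonneg ht.1 (fun s _ => (hg_pos s).le)
  have hWη : ∀ t ∈ Icc (0:ℝ) t0, η ≤ W t := fun t ht =>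
    le_add_of_nonneg_right (mul_nonneg (Nat.cast_nonneg d) (hFnn t ht))
  have hWpos : ∀ t ∈ Icc (0:ℝ) t0, 0 < W t := fun t ht => lt_of_lt_of_le hη (hWη t ht)
  have huW : ∀ t ∈ Icc (0:ℝ) t0, u t ≤ W t := by
    intro t ht
    have h1 : δ * t ≤ η := by
      rw [hη_def]; exact mul_le_mul_of_nonneg_left ht.2 hδ.le
    have h2 : (∫ s in (0:ℝ)..t, ρ (u s)) ≤ F t := by
      by_cases hint : IntervalIntegrable (fun s => ρ (u s)) volume 0 t
      · apply intervalIntegral.integral_mono_on ht.1 hint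
          (hgc.intervalIntegrable _ _)
        intro s _
        exact hρmono (hunn s) (le_of_lt (hmax_pos s)) (le_max_left _ _)
      · rw [intervalIntegral.integral_undef hint]
        exact hFnn t ht
    have h3 := hub t ht
    have h4 : (d:ℝ) * (∫ s in (0:ℝ)..t, ρ (u s)) ≤ (d:ℝ) * F t :=
      mul_le_mul_of_nonneg_left h2 (Nat.cast_nonneg d)
    simp only [hW_def]; linarith
  have hmaxW : ∀ t ∈ Icc (0:ℝ) t0, max (u t) η ≤ W t := fun t ht =>
    max_le (huW t ht) (hWη t ht)
  -- derivative of Grho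
  have hGder : ∀ r : ℝ, 0 < r → HasDerivAt (Grho ρ) (1 / ρ r) r := by
    intro r hr
    have hcont : ContinuousAt (fun x => 1 / ρ x) r :=
      ((oneDivRho_contOn hρc hρpos).continuousAt (Ioi_mem_nhds hr))
    have hmeas : StronglyMeasurableAtFilter (fun x => 1 / ρ x) (nhds r) volume :=
      (oneDivRho_contOn hρc hρpos).stronglyMeasurableAtFilter isOpen_Ioi r hr
    exact intervalIntegral.integral_hasDerivAt_right
      (grho_integrable hρc hρpos one_pos hr) hmeas hcont
  set h : ℝ → ℝ := fun t => Grho ρ (W t) - (d:ℝ) * t with hh_def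
  have hcomp : ∀ t ∈ Icc (0:ℝ) t0,
      HasDerivAt h ((1 / ρ (W t)) * ((d:ℝ) * g t) - (d:ℝ)) t := by
    intro t ht
    have h1 : HasDerivAt (fun t => Grho ρ (W t)) ((1 / ρ (W t)) * ((d:ℝ) * g t)) t :=
      (hGder (W t) (hWpos t ht)).comp t (hw' t)
    have h2 : HasDerivAt (fun t : ℝ => (d:ℝ) * t) ((d:ℝ)) t := by
      simpa using (hasDerivAt_id t).const_mul (d:ℝ)
    exact h1.sub h2
  have hder_nonpos : ∀ t ∈ Icc (0:ℝ) t0,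
      (1 / ρ (W t)) * ((d:ℝ) * g t) - (d:ℝ) ≤ 0 := by
    intro t ht
    have hρW : 0 < ρ (W t) := hρpos _ (hWpos t ht)
    have hgle : g t ≤ ρ (W t) :=
      hρmono (le_of_lt (hmax_pos t)) (hWpos t ht).le (hmaxW t ht)
    have h1 : (d:ℝ) * g t ≤ (d:ℝ) * ρ (W t) :=
      mul_le_mul_of_nonneg_left hgle (Nat.cast_nonneg d)
    have h2 : (1 / ρ (W t)) * ((d:ℝ) * g t) ≤ (1 / ρ (W t)) * ((d:ℝ) * ρ (W t)) :=
      mul_le_mul_of_nonneg_left h1 (by positivity)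
    have h3 : (1 / ρ (W t)) * ((d:ℝ) * ρ (W t)) = (d:ℝ) := by
      field_simp
    linarith
  have hanti : AntitoneOn h (Icc (0:ℝ) t0) := by
    apply antitoneOn_of_deriv_nonpos (convex_Icc 0 t0)
    · intro t ht
      exact (hcomp t ht).continuousAt.continuousWithinAt
    · intro t ht
      rw [interior_Icc] at ht
      exact ((hcomp t (Ioo_subset_Icc_self ht)).differentiableAt).differentiableWithinAt
    · intro t ht
      rw [interior_Icc] at ht
      rw [(hcomp t (Ioo_subset_Icc_self ht)).deriv]
      exact hder_nonpos t (Ioo_subset_Icc_self ht)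
  have hkey : h t0 ≤ h 0 :=
    hanti (left_mem_Icc.mpr ht0.le) (right_mem_Icc.mpr ht0.le) ht0.le
  have hW0 : W 0 = η := by
    simp only [hW_def, hF_def, intervalIntegral.integral_same, mul_zero, add_zero]
  have hh0 : h 0 = Grho ρ η := by
    simp only [hh_def, hW0, mul_zero, sub_zero]
  refine ⟨W t0, huW t0 (right_mem_Icc.mpr ht0.le), hWpos t0 (right_mem_Icc.mpr ht0.le), ?_⟩
  have : Grho ρ (W t0) - (d:ℝ) * t0 ≤ Grho ρ η := by
    rw [← hh0]; exact hkey
  linarith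

/-- Stability/uniqueness for the ODE with additive forcing under the one-sided condition:
from `‖X_t - X̃_t‖₁ ≤ d∫_0^t ρ(‖X_s - X̃_s‖₁) ds + δ t` one gets
`‖X_t - X̃_t‖₁ ≤ G_ρ⁻¹(G_ρ(δ t) + d t)`; in particular `δ = 0` gives uniqueness. -/
theorem ode_stability_onesided (d : ℕ) (ρ : ℝ → ℝ)
    (hρc : ContinuousOn ρ (Ioi 0))
    (hρpos : ∀ r > 0, 0 < ρ r)
    (hρnonneg : ∀ r ≥ 0, 0 ≤ ρ r)
    (hρmono : MonotoneOn ρ (Ici 0))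
    (hρlin : ∃ C > 0, ∀ r > 0, ρ r ≤ C * (1 + r))
    (hOsgood : Tendsto (fun ε => ∫ u in ε..(1:ℝ), 1 / ρ u) (nhdsWithin 0 (Ioi 0)) atTop)
    (b btil : (Fin d → ℝ) → (Fin d → ℝ)) (hb : Continuous b) (hbtil : Continuous btil)
    (honeb : ∀ (j : Fin d) (x y : Fin d → ℝ),
      (x j - y j) * (b x j - b y j) ≤ |x j - y j| * ρ (∑ i, |x i - y i|))
    (honebtil : ∀ (j : Fin d) (x y : Fin d → ℝ),
      (x j - y j) * (btil x j - btil y j) ≤ |x j - y j| * ρ (∑ i, |x i - y i|))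
    (w X Xtil : ℝ → Fin d → ℝ)
    (hw : Continuous w) (hX : Continuous X) (hXtil : Continuous Xtil)
    (x : Fin d → ℝ) (T δ : ℝ) (hT : 0 < T) (hδ : 0 ≤ δ)
    (heqX : ∀ t ≥ (0:ℝ), ∀ j, X t j = x j + (∫ s in (0:ℝ)..t, b (X s) j) + w t j)
    (heqXtil : ∀ t ≥ (0:ℝ), ∀ j, Xtil t j = x j + (∫ s in (0:ℝ)..t, btil (Xtil s) j) + w t j)
    (hδb : ∀ t ∈ Icc (0:ℝ) T, ∑ j, |b (X t) j - btil (X t) j| ≤ δ)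
    (hbound : ∀ t ∈ Icc (0:ℝ) T,
      ∑ j, |X t j - Xtil t j| ≤
        (d : ℝ) * (∫ s in (0:ℝ)..t, ρ (∑ j, |X s j - Xtil s j|)) + δ * t) :
    (∀ t ∈ Icc (0:ℝ) T,
      ∑ j, |X t j - Xtil t j| ≤ GrhoInv ρ (Grho ρ (δ * t) + (d : ℝ) * t)) ∧
    (δ = 0 → ∀ t ∈ Icc (0:ℝ) T, X t = Xtil t) := by
  set φ : ℝ → ℝ := fun t => ∑ j, |X t j - Xtil t j| with hφ_def
  have hφc : Continuous φ := by
    apply continuous_finset_sum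
    intro j _
    exact (((continuous_apply j).comp hX).sub ((continuous_apply j).comp hXtil)).abs
  have hφnn : ∀ t, 0 ≤ φ t := fun t => Finset.sum_nonneg (fun j _ => abs_nonneg _)
  have hφ0 : φ 0 = 0 := by
    have hx0 : ∀ j, X 0 j = Xtil 0 j := by
      intro j
      rw [heqX 0 le_rfl j, heqXtil 0 le_rfl j, intervalIntegral.integral_same,
        intervalIntegral.integral_same]
    simp only [hφ_def]
    apply Finset.sum_eq_zero
    intro j _
    rw [hx0 j, sub_self, abs_zero]
  have hGrhoInv_nonneg : ∀ s, 0 ≤ GrhoInv ρ s := fun s =>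
    Real.sInf_nonneg (fun r hr => hr.1.le)
  -- part 2 : pointwise zero when δ = 0
  have part2 : δ = 0 → ∀ t ∈ Icc (0:ℝ) T, φ t = 0 := by
    intro hδ0 t0 ht0
    rcases eq_or_lt_of_le ht0.1 with h0 | h0
    · rw [← h0, hφ0]
    by_contra hne
    have hφpos : 0 < φ t0 := lt_of_le_of_ne (hφnn t0) (Ne.symm hne)
    set M : ℝ := (d:ℝ) * t0 - Grho ρ (φ t0) + 1 with hM_def
    obtain ⟨η, hηM, hη0⟩ :=
      ((hOsgood.eventually_ge_atTop M).and self_mem_nhdsWithin).exists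
    have hη0' : (0:ℝ) < η := hη0
    set ε : ℝ := η / t0 with hε_def
    have hε : 0 < ε := div_pos hη0' h0
    have hub : ∀ t ∈ Icc (0:ℝ) t0, φ t ≤ (d:ℝ) * (∫ s in (0:ℝ)..t, ρ (φ s)) + ε * t := by
      intro t ht
      have htT : t ∈ Icc (0:ℝ) T := ⟨ht.1, ht.2.trans ht0.2⟩
      have := hbound t htT
      rw [hδ0] at this
      have hεt : 0 ≤ ε * t := mul_nonneg hε.le ht.1
      simp only [hφ_def]
      linarith
    obtain ⟨W, hφW, hWpos, hGW⟩ :=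
      bihari_core hρc hρpos hρmono d φ hφc hφnn t0 ε h0 hε hub
    have hεt0 : ε * t0 = η := div_mul_cancel₀ η h0.ne'
    rw [hεt0] at hGW
    have h1 : Grho ρ (φ t0) ≤ Grho ρ W := grho_mono hρc hρpos hφpos hφW
    have h2 : Grho ρ η = -∫ u in η..(1:ℝ), 1 / ρ u := by
      rw [Grho, intervalIntegral.integral_symm]
    have h3 : Grho ρ η ≤ -M := by rw [h2]; linarith
    simp only [hM_def] at h3
    linarith
  constructor
  · -- part 1
    intro t ht
    show φ t ≤ GrhoInv ρ (Grho ρ (δ * t) + (d:ℝ) * t)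
    rcases eq_or_lt_of_le ht.1 with h0 | h0
    · rw [← h0, hφ0]
      exact hGrhoInv_nonneg _
    rcases eq_or_lt_of_le hδ with hδ0 | hδ0
    · rw [part2 hδ0.symm t ht]
      exact hGrhoInv_nonneg _
    · have hub : ∀ s ∈ Icc (0:ℝ) t, φ s ≤ (d:ℝ) * (∫ r in (0:ℝ)..s, ρ (φ r)) + δ * s := by
        intro s hs
        exact hbound s ⟨hs.1, hs.2.trans ht.2⟩
      obtain ⟨W, hφW, hWpos, hGW⟩ :=
        bihari_core hρc hρpos hρmono d φ hφc hφnn t δ h0 hδ0 hub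
      obtain ⟨r0, hr0pos, hr0⟩ := grho_unbounded hρc hρpos hρlin (Grho ρ (δ * t) + (d:ℝ) * t)
      have hne : {r : ℝ | 0 < r ∧ Grho ρ (δ * t) + (d:ℝ) * t ≤ Grho ρ r}.Nonempty :=
        ⟨r0, hr0pos, hr0⟩
      rw [GrhoInv]
      apply le_csInf hne
      rintro r ⟨hr1, hr2⟩
      have hWr : W ≤ r := grho_le_imp hρc hρpos hWpos hr1 (hGW.trans hr2)
      exact hφW.trans hWr
  · -- part 2 conclusion
    intro hδ0 t ht
    have hzero := part2 hδ0 t ht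
    funext j
    have hj : |X t j - Xtil t j| = 0 := by
      have hle : |X t j - Xtil t j| ≤ φ t :=
        Finset.single_le_sum (f := fun j => |X t j - Xtil t j|)
          (fun i _ => abs_nonneg _) (Finset.mem_univ j)
      have := abs_nonneg (X t j - Xtil t j)
      linarith [hzero ▸ hle]
    have := abs_eq_zero.mp hj
    linarith [sub_eq_zero.mp this]
end

section
/- With the notation of the previous statement, suppose in addition each ℓ_j is strictly increasing, and for ε ∈ (0,1) set κ = κ_T := Γ_ρ(dT, ‖x-y‖₁) / (ℓ_1(εT) ∧ ⋯ ∧ ℓ_d(εT)). Then Σ_j ℓ_j(T ∧ τ_j) ≤ ℓ_1(εT) ∧ ⋯ ∧ ℓ_d(εT), and consequently τ_j ≤ T for every j = 1,…,d. -/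
open Set MeasureTheory Filter

/-- `Γ_ρ(T, r) = r + T ρ(G_ρ⁻¹(G_ρ(r) + T))`. -/
noncomputable def GamRho (ρ : ℝ → ℝ) (T r : ℝ) : ℝ := r + T * ρ (GrhoInv ρ (Grho ρ r + T))

set_option maxHeartbeats 1000000 in
/-- The coupling succeeds before time `T`: with
`κ = Γ_ρ(dT, ‖x-y‖₁)/(ℓ_1(εT) ∧ ⋯ ∧ ℓ_d(εT))`, one has
`Σ_j ℓ_j(T ∧ τ_j) ≤ ℓ_1(εT) ∧ ⋯ ∧ ℓ_d(εT)` and hence `τ_j ≤ T` for all `j`. -/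
theorem coupling_succeeds (d : ℕ) (hd : 0 < d) (ρ : ℝ → ℝ)
    (hρc : ContinuousOn ρ (Ioi 0))
    (hρpos : ∀ r > 0, 0 < ρ r)
    (hρnonneg : ∀ r ≥ 0, 0 ≤ ρ r)
    (hρmono : MonotoneOn ρ (Ici 0))
    (hρlin : ∃ C > 0, ∀ r > 0, ρ r ≤ C * (1 + r))
    (hOsgood : Tendsto (fun ε => ∫ u in ε..(1:ℝ), 1 / ρ u) (nhdsWithin 0 (Ioi 0)) atTop)
    (T : ℝ) (hT : 0 < T) (x y : Fin d → ℝ)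
    (Z : ℝ → Fin d → ℝ) (hZ0 : Z 0 = x - y)
    (hZac : ∃ g : ℝ → Fin d → ℝ,
      (∀ j, ∀ a b : ℝ, IntervalIntegrable (fun s => g s j) volume a b) ∧
      ∀ t ≥ (0:ℝ), ∀ j, Z t j = Z 0 j + ∫ s in (0:ℝ)..t, g s j)
    (ℓ : Fin d → ℝ → ℝ)
    (hℓmono : ∀ j, MonotoneOn (ℓ j) (Ici 0))
    (hℓstrict : ∀ j, StrictMonoOn (ℓ j) (Ici 0))
    (hℓ0 : ∀ j, ℓ j 0 = 0) (hℓnonneg : ∀ j, ∀ t ≥ (0:ℝ), 0 ≤ ℓ j t)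
    (τ : Fin d → ℝ) (hτ : ∀ j, 0 ≤ τ j)
    (ε : ℝ) (hε : ε ∈ Ioo (0:ℝ) 1)
    (κ : ℝ)
    (hκdef : κ = GamRho ρ ((d : ℝ) * T) (∑ j, |x j - y j|) / (⨅ j, ℓ j (ε * T)))
    (hkey : ∀ t ≥ (0:ℝ),
      (∑ j, |Z t j|) + κ * (∑ j, ℓ j (min t (τ j))) ≤
        (∑ j, |Z 0 j|) + (d : ℝ) * ∫ s in (0:ℝ)..t, ρ (∑ j, |Z s j|)) :
    (∑ j, ℓ j (min T (τ j))) ≤ (⨅ j, ℓ j (ε * T)) ∧ ∀ j, τ j ≤ T := by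
  obtain ⟨hε0, hε1⟩ := hε
  obtain ⟨g, hgint, hZrep⟩ := hZac
  obtain ⟨C, hC, hρC⟩ := hρlin
  have hdpos : (0:ℝ) < (d:ℝ) := Nat.cast_pos.mpr hd
  set r0 : ℝ := ∑ j, |x j - y j| with hr0def
  have hr0nonneg : (0:ℝ) ≤ r0 := Finset.sum_nonneg fun j _ => abs_nonneg _
  -- integrability of 1/ρ on positive intervals
  have hinv_int : ∀ a b : ℝ, 0 < a → 0 < b →
      IntervalIntegrable (fun u => 1 / ρ u) volume a b := by
    intro a b ha hb
    apply ContinuousOn.intervalIntegrable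
    have hsub : uIcc a b ⊆ Ioi 0 := by
      intro u hu
      rcases mem_uIcc.mp hu with h | h
      · exact lt_of_lt_of_le ha h.1
      · exact lt_of_lt_of_le hb h.1
    exact continuousOn_const.div (hρc.mono hsub) fun u hu => ne_of_gt (hρpos u (hsub hu))
  have hGdiff : ∀ a b : ℝ, 0 < a → 0 < b →
      Grho ρ b - Grho ρ a = ∫ u in a..b, 1 / ρ u := by
    intro a b ha hb
    have h1 := intervalIntegral.integral_add_adjacent_intervals
      (hinv_int 1 a one_pos ha) (hinv_int a b ha hb)
    simp only [Grho]
    linarith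
  have hGle : ∀ a b : ℝ, 0 < a → a ≤ b → Grho ρ b - Grho ρ a ≤ (b - a) * (1 / ρ a) := by
    intro a b ha hab
    have hb : 0 < b := lt_of_lt_of_le ha hab
    rw [hGdiff a b ha hb]
    calc (∫ u in a..b, 1 / ρ u) ≤ ∫ _u in a..b, 1 / ρ a := by
          apply intervalIntegral.integral_mono_on hab (hinv_int a b ha hb)
            intervalIntegrable_const
          intro u hu
          have hupos : 0 < u := lt_of_lt_of_le ha hu.1
          exact one_div_le_one_div_of_le (hρpos a ha)
            (hρmono (mem_Ici.mpr ha.le) (mem_Ici.mpr hupos.le) hu.1)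
      _ = (b - a) * (1 / ρ a) := by simp [smul_eq_mul]
  have hGlt : ∀ a b : ℝ, 0 < a → a < b → Grho ρ a < Grho ρ b := by
    intro a b ha hab
    have hb : 0 < b := ha.trans hab
    have key : (b - a) * (1 / ρ b) ≤ Grho ρ b - Grho ρ a := by
      rw [hGdiff a b ha hb]
      calc (b - a) * (1 / ρ b) = ∫ _u in a..b, 1 / ρ b := by simp [smul_eq_mul]
        _ ≤ ∫ u in a..b, 1 / ρ u := by
            apply intervalIntegral.integral_mono_on hab.le intervalIntegrable_const
              (hinv_int a b ha hb)
            intro u hu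
            have hupos : 0 < u := lt_of_lt_of_le ha hu.1
            exact one_div_le_one_div_of_le (hρpos u hupos)
              (hρmono (mem_Ici.mpr hupos.le) (mem_Ici.mpr hb.le) hu.2)
    nlinarith [mul_pos (sub_pos.mpr hab) (one_div_pos.mpr (hρpos b hb))]
  -- Grho is unbounded above
  have hGtop : ∀ s : ℝ, ∃ r : ℝ, 0 < r ∧ s ≤ Grho ρ r := by
    intro s
    set r : ℝ := max 1 (2 * Real.exp (C * s)) with hrdef
    have hr1 : (1:ℝ) ≤ r := le_max_left _ _
    have hrpos : (0:ℝ) < r := lt_of_lt_of_le one_pos hr1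
    refine ⟨r, hrpos, ?_⟩
    have hcompint : IntervalIntegrable (fun u => 1 / (C * (1 + u))) volume 1 r := by
      apply ContinuousOn.intervalIntegrable
      apply continuousOn_const.div
      · exact continuousOn_const.mul (continuousOn_const.add continuousOn_id)
      · intro u hu
        rcases mem_uIcc.mp hu with h | h
        · nlinarith [h.1]
        · nlinarith [h.1, hr1]
    have hcomp : (∫ u in (1:ℝ)..r, 1 / (C * (1 + u))) ≤ ∫ u in (1:ℝ)..r, 1 / ρ u := by
      apply intervalIntegral.integral_mono_on hr1 hcompint (hinv_int 1 r one_pos hrpos)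
      intro u hu
      have hupos : (0:ℝ) < u := lt_of_lt_of_le one_pos hu.1
      exact one_div_le_one_div_of_le (hρpos u hupos) (hρC u hupos)
    have hcalc : (∫ u in (1:ℝ)..r, 1 / (C * (1 + u))) = (1 / C) * Real.log ((r + 1) / 2) := by
      have h1 : ∀ u : ℝ, 1 / (C * (1 + u)) = (1 / C) * (1 / (1 + u)) := by
        intro u; rw [div_mul_div_comm, one_mul]
      simp only [h1]
      rw [intervalIntegral.integral_const_mul]
      congr 1
      have h2 : ∀ u : ℝ, 1 / (1 + u) = (fun v : ℝ => 1 / v) (u + 1) := by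
        intro u; simp [add_comm]
      simp only [h2]
      rw [intervalIntegral.integral_comp_add_right (fun v : ℝ => 1 / v) 1]
      rw [integral_one_div]
      · norm_num
      · intro hmem
        rw [uIcc_of_le (by linarith : (1:ℝ) + 1 ≤ r + 1)] at hmem
        have := hmem.1
        norm_num at this
    have hexp : Real.exp (C * s) ≤ (r + 1) / 2 := by
      have h2 : 2 * Real.exp (C * s) ≤ r := le_max_right _ _
      linarith
    have hlog : C * s ≤ Real.log ((r + 1) / 2) := by
      calc C * s = Real.log (Real.exp (C * s)) := (Real.log_exp _).symm
        _ ≤ Real.log ((r + 1) / 2) := Real.log_le_log (Real.exp_pos _) hexp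
    have : s ≤ (1 / C) * Real.log ((r + 1) / 2) := by
      have := mul_le_mul_of_nonneg_left hlog (le_of_lt (one_div_pos.mpr hC))
      calc s = (1 / C) * (C * s) := by field_simp
        _ ≤ (1 / C) * Real.log ((r + 1) / 2) := this
    calc s ≤ (1 / C) * Real.log ((r + 1) / 2) := this
      _ = (∫ u in (1:ℝ)..r, 1 / (C * (1 + u))) := hcalc.symm
      _ ≤ ∫ u in (1:ℝ)..r, 1 / ρ u := hcomp
      _ = Grho ρ r := rfl
  have hInvne : ∀ s : ℝ, {r : ℝ | 0 < r ∧ s ≤ Grho ρ r}.Nonempty := by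
    intro s; obtain ⟨r, hr1, hr2⟩ := hGtop s; exact ⟨r, hr1, hr2⟩
  have hInv_nonneg : ∀ s : ℝ, 0 ≤ GrhoInv ρ s := by
    intro s
    exact le_csInf (hInvne s) fun r hr => hr.1.le
  have hInv_lb : ∀ s xv : ℝ, 0 < xv → Grho ρ xv ≤ s → xv ≤ GrhoInv ρ s := by
    intro s xv hx hGx
    apply le_csInf (hInvne s)
    intro r hr
    by_contra hlt
    push_neg at hlt
    have := hGlt r xv hr.1 hlt
    linarith [hr.2]
  -- the function f(t) = Σ |Z t j| (extended continuously to all of ℝ)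
  set f : ℝ → ℝ := fun t => ∑ j, |Z 0 j + ∫ s in (0:ℝ)..t, g s j| with hfdef
  have hfcont : Continuous f := by
    rw [hfdef]
    apply continuous_finset_sum
    intro j _
    exact (continuous_const.add (intervalIntegral.continuous_primitive (hgint j) 0)).abs
  have hfnonneg : ∀ t, 0 ≤ f t := by
    intro t; rw [hfdef]
    exact Finset.sum_nonneg fun j _ => abs_nonneg _
  have hfZ : ∀ t, 0 ≤ t → (∑ j, |Z t j|) = f t := by
    intro t ht
    rw [hfdef]
    exact Finset.sum_congr rfl fun j _ => by rw [hZrep t ht j]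
  set ρ' : ℝ → ℝ := fun u => ρ (max u 0) with hρ'def
  have hρ'mono : Monotone ρ' := by
    intro u v huv
    simp only [hρ'def]
    exact hρmono (mem_Ici.mpr (le_max_right _ _)) (mem_Ici.mpr (le_max_right _ _))
      (max_le_max huv le_rfl)
  have hρ'eq : ∀ u : ℝ, 0 ≤ u → ρ' u = ρ u := by
    intro u hu; simp only [hρ'def, max_eq_left hu]
  have hρ'nonneg : ∀ u, 0 ≤ ρ' u := by
    intro u; simp only [hρ'def]; exact hρnonneg _ (le_max_right _ _)
  set h : ℝ → ℝ := fun sv => ρ' (f sv) with hhdef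
  have hhnonneg : ∀ sv, 0 ≤ h sv := by
    intro sv; rw [hhdef]; exact hρ'nonneg _
  have hhint : ∀ a b : ℝ, IntervalIntegrable h volume a b := by
    intro a b
    rw [intervalIntegrable_iff]
    obtain ⟨u0, hu0mem, hu0⟩ := isCompact_uIcc.exists_isMaxOn nonempty_uIcc
      (hfcont.continuousOn (s := uIcc a b))
    apply Measure.integrableOn_of_bounded (M := ρ' (f u0))
    · rw [Set.uIoc]; exact measure_Ioc_lt_top.ne
    · have : Measurable h := by
        rw [hhdef]; exact hρ'mono.measurable.comp hfcont.measurable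
      exact this.aestronglyMeasurable
    · refine (ae_restrict_iff' measurableSet_uIoc).mpr (ae_of_all _ ?_)
      intro sv hsv
      have hmem : sv ∈ uIcc a b := uIoc_subset_uIcc hsv
      rw [Real.norm_eq_abs, abs_of_nonneg (hhnonneg sv), hhdef]
      exact hρ'mono (hu0 hmem)
  set F : ℝ → ℝ := fun t => r0 + (d:ℝ) * ∫ s in (0:ℝ)..t, h s with hFdef
  have hFcont : Continuous F := by
    rw [hFdef]
    exact continuous_const.add
      (continuous_const.mul (intervalIntegral.continuous_primitive hhint 0))
  have hFadd : ∀ t1 t2 : ℝ, F t2 - F t1 = (d:ℝ) * ∫ s in t1..t2, h s := by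
    intro t1 t2
    have h1 := intervalIntegral.integral_add_adjacent_intervals (hhint 0 t1) (hhint t1 t2)
    simp only [hFdef]
    linear_combination (-(d:ℝ)) * h1
  have hFmono : Monotone F := by
    intro t1 t2 h12
    have h0 : 0 ≤ ∫ s in t1..t2, h s :=
      intervalIntegral.integral_nonneg h12 fun s _ => hhnonneg s
    have := hFadd t1 t2
    nlinarith
  have hF0 : F 0 = r0 := by simp [hFdef]
  -- the quantities B, Γ, m, κ
  set s0 : ℝ := Grho ρ r0 + (d:ℝ) * T with hs0def
  set B : ℝ := GrhoInv ρ s0 with hBdef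
  have hBnonneg : 0 ≤ B := by rw [hBdef]; exact hInv_nonneg s0
  have hΓeq : GamRho ρ ((d:ℝ) * T) r0 = r0 + ((d:ℝ) * T) * ρ B := by
    rw [hBdef, hs0def]; rfl
  have hρBnonneg : 0 ≤ ρ B := hρnonneg B hBnonneg
  have hdT : 0 < (d:ℝ) * T := mul_pos hdpos hT
  have hNI : ¬ IntervalIntegrable (fun u => 1 / ρ u) volume 0 1 := by
    intro hi
    have hbdd : ∀ᶠ e in nhdsWithin (0:ℝ) (Ioi 0),
        (∫ u in e..(1:ℝ), 1 / ρ u) ≤ ∫ u in (0:ℝ)..(1:ℝ), 1 / ρ u := by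
      filter_upwards [self_mem_nhdsWithin,
        (eventually_lt_nhds one_pos).filter_mono nhdsWithin_le_nhds] with e he0 he1
      rw [intervalIntegral.integral_of_le he1.le, intervalIntegral.integral_of_le zero_le_one]
      apply setIntegral_mono_set hi.1
      · refine (ae_restrict_iff' measurableSet_Ioc).mpr (ae_of_all _ ?_)
        intro u hu
        exact le_of_lt (one_div_pos.mpr (hρpos u hu.1))
      · exact HasSubset.Subset.eventuallyLE (Ioc_subset_Ioc_left (le_of_lt he0))
    obtain ⟨e, hgt, hle⟩ :=
      ((hOsgood.eventually_gt_atTop (∫ u in (0:ℝ)..(1:ℝ), 1 / ρ u)).and hbdd).exists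
    exact absurd hle (not_le.mpr hgt)
  have hG0 : Grho ρ 0 = 0 := by
    have hsymm := intervalIntegral.integral_symm (μ := volume)
      (f := fun u => 1 / ρ u) 0 1
    rw [Grho, hsymm, intervalIntegral.integral_undef hNI, neg_zero]
  have hΓpos : 0 < GamRho ρ ((d:ℝ) * T) r0 := by
    rcases hr0nonneg.lt_or_eq with hpos | heq
    · rw [hΓeq]
      have := mul_nonneg hdT.le hρBnonneg
      linarith
    · have hB1 : (1:ℝ) ≤ B := by
        rw [hBdef]
        apply hInv_lb s0 1 one_pos
        have hG1 : Grho ρ 1 = 0 := intervalIntegral.integral_same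
        rw [hG1, hs0def, ← heq, hG0]
        linarith
      have hρ1B : ρ 1 ≤ ρ B := hρmono (mem_Ici.mpr zero_le_one)
        (mem_Ici.mpr hBnonneg) hB1
      have hρ1 : 0 < ρ 1 := hρpos 1 one_pos
      rw [hΓeq, ← heq]
      nlinarith
  haveI : Nonempty (Fin d) := Fin.pos_iff_nonempty.mp hd
  have hεT : 0 < ε * T := mul_pos hε0 hT
  have hℓpos : ∀ j, 0 < ℓ j (ε * T) := by
    intro j
    have := hℓstrict j (mem_Ici.mpr le_rfl) (mem_Ici.mpr hεT.le) hεT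
    rwa [hℓ0 j] at this
  set m : ℝ := ⨅ j, ℓ j (ε * T) with hmdef
  have hbddm : BddBelow (range fun j => ℓ j (ε * T)) := (Set.finite_range _).bddBelow
  have hmle : ∀ j, m ≤ ℓ j (ε * T) := by
    intro j; rw [hmdef]; exact ciInf_le hbddm j
  have hmpos : 0 < m := by
    obtain ⟨j0, hj0⟩ := exists_eq_ciInf_of_finite (f := fun j => ℓ j (ε * T))
    rw [hmdef, ← hj0]
    exact hℓpos j0
  have hκ : κ = GamRho ρ ((d:ℝ) * T) r0 / m := hκdef
  have hκpos : 0 < κ := by rw [hκ]; exact div_pos hΓpos hmpos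
  -- the key inequality, rewritten
  have hZ0sum : (∑ j, |Z 0 j|) = r0 := by
    rw [hr0def]
    exact Finset.sum_congr rfl fun j _ => by rw [hZ0]; simp [Pi.sub_apply]
  have hicongr : ∀ t : ℝ, 0 ≤ t →
      (∫ s in (0:ℝ)..t, ρ (∑ j, |Z s j|)) = ∫ s in (0:ℝ)..t, h s := by
    intro t ht
    apply intervalIntegral.integral_congr
    intro s hs
    rw [uIcc_of_le ht] at hs
    have hs0 : 0 ≤ s := hs.1
    show ρ (∑ j, |Z s j|) = h s
    rw [hfZ s hs0, hhdef]
    simp only [hρ'def, max_eq_left (hfnonneg s)]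
  have hℓsum : ∀ t : ℝ, 0 ≤ t → 0 ≤ ∑ j, ℓ j (min t (τ j)) := by
    intro t ht
    exact Finset.sum_nonneg fun j _ => hℓnonneg j _ (le_min ht (hτ j))
  have hkey' : ∀ t, 0 ≤ t → f t + κ * (∑ j, ℓ j (min t (τ j))) ≤ F t := by
    intro t ht
    have hk := hkey t ht
    rw [hfZ t ht, hicongr t ht, hZ0sum] at hk
    simpa only [hFdef] using hk
  have hfF : ∀ t, 0 ≤ t → f t ≤ F t := by
    intro t ht
    have := hkey' t ht
    nlinarith [mul_nonneg hκpos.le (hℓsum t ht)]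
  -- slope estimate
  have hslope : ∀ t1 t2 : ℝ, 0 ≤ t1 → t1 ≤ t2 →
      F t2 - F t1 ≤ (d:ℝ) * ((t2 - t1) * ρ' (F t2)) := by
    intro t1 t2 h1 h12
    rw [hFadd t1 t2]
    apply mul_le_mul_of_nonneg_left ?_ hdpos.le
    calc (∫ s in t1..t2, h s) ≤ ∫ _s in t1..t2, ρ' (F t2) := by
          apply intervalIntegral.integral_mono_on h12 (hhint t1 t2) intervalIntegrable_const
          intro s hs
          rw [hhdef]
          exact hρ'mono (le_trans (hfF s (le_trans h1 hs.1)) (hFmono hs.2))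
      _ = (t2 - t1) * ρ' (F t2) := by simp [smul_eq_mul]
  -- continuity of Grho on positive intervals
  have hGcont : ∀ p q : ℝ, 0 < p → ContinuousOn (Grho ρ) (Icc p q) := by
    intro p q hp
    rcases le_or_gt p q with hpq | hpq
    · have hq : 0 < q := lt_of_lt_of_le hp hpq
      have hint : IntegrableOn (fun u => 1 / ρ u) (uIcc p q) volume := by
        rw [← intervalIntegrable_iff']
        exact hinv_int p q hp hq
      have hcp := intervalIntegral.continuousOn_primitive_interval hint
      rw [uIcc_of_le hpq] at hcp
      have hadd : ContinuousOn (fun xv => Grho ρ p + ∫ u in p..xv, 1 / ρ u) (Icc p q) :=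
        continuousOn_const.add hcp
      apply hadd.congr
      intro xv hx
      have hxpos : 0 < xv := lt_of_lt_of_le hp hx.1
      have hd2 := hGdiff p xv hp hxpos
      show Grho ρ xv = Grho ρ p + ∫ u in p..xv, 1 / ρ u
      linarith
    · rw [Icc_eq_empty (not_le.mpr hpq)]
      exact continuousOn_empty _
  -- core Grönwall-Bihari estimate via continuous induction
  have core : ∀ a b δ : ℝ, 0 ≤ a → a ≤ b → 0 < δ → 0 < F a →
      ∀ t ∈ Icc a b, Grho ρ (F t) ≤ Grho ρ (F a) + (d:ℝ) * (1 + δ) * (t - a) := by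
    intro a b δ ha hab hδ hFa
    set S : Set ℝ := {t | Grho ρ (F t) ≤ Grho ρ (F a) + (d:ℝ) * (1 + δ) * (t - a)} with hSdef
    have hsub : Icc a b ⊆ S := by
      have hclosed : IsClosed (S ∩ Icc a b) := by
        have hmaps : MapsTo F (Icc a b) (Icc (F a) (F b)) :=
          fun t ht => ⟨hFmono ht.1, hFmono ht.2⟩
        have hψ : ContinuousOn (fun t => Grho ρ (F t)) (Icc a b) :=
          (hGcont (F a) (F b) hFa).comp hFcont.continuousOn hmaps
        have hφ : ContinuousOn
            (fun t => Grho ρ (F t) - (Grho ρ (F a) + (d:ℝ) * (1 + δ) * (t - a)))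
            (Icc a b) :=
          hψ.sub ((continuous_const.add
            (continuous_const.mul (continuous_id.sub continuous_const))).continuousOn)
        have hSeq : S ∩ Icc a b = Icc a b ∩
            (fun t => Grho ρ (F t) - (Grho ρ (F a) + (d:ℝ) * (1 + δ) * (t - a))) ⁻¹'
              (Iic 0) := by
          ext t
          simp only [hSdef, mem_inter_iff, mem_setOf_eq, mem_preimage, mem_Iic, sub_nonpos]
          tauto
        rw [hSeq]
        exact hφ.preimage_isClosed_of_isClosed isClosed_Icc isClosed_Iic
      have hbase : a ∈ S := by
        simp only [hSdef, mem_setOf_eq, sub_self, mul_zero]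
        linarith
      apply hclosed.Icc_subset_of_forall_exists_gt hbase
      rintro t ⟨htS, hta, htb⟩ yv hyv
      have hFt : 0 < F t := lt_of_lt_of_le hFa (hFmono hta)
      have hcontρF : ContinuousAt (fun u => ρ' (F u)) t := by
        have hmax : ContinuousAt (fun u => max (F u) 0) t :=
          hFcont.continuousAt.max continuous_const.continuousAt
        have h2 : ContinuousAt ρ ((fun u => max (F u) 0) t) := by
          show ContinuousAt ρ (max (F t) 0)
          rw [max_eq_left hFt.le]
          exact hρc.continuousAt (Ioi_mem_nhds hFt)
        have hcomp := ContinuousAt.comp (g := ρ) (f := fun u => max (F u) 0) (x := t) h2 hmax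
        simpa only [hρ'def, Function.comp_def] using hcomp
      have hv : ρ' (F t) < (1 + δ) * ρ' (F t) := by
        have hρ'Ft : ρ' (F t) = ρ (F t) := hρ'eq _ hFt.le
        have h0 : 0 < ρ (F t) := hρpos _ hFt
        nlinarith
      have hev : ∀ᶠ u in nhds t, ρ' (F u) < (1 + δ) * ρ' (F t) :=
        hcontρF.eventually_lt_const hv
      rw [Metric.eventually_nhds_iff] at hev
      obtain ⟨η, hη, hball⟩ := hev
      set z : ℝ := min (t + η / 2) yv with hzdef
      have hzt : t < z := lt_min (by linarith) hyv
      have hzy : z ≤ yv := min_le_right _ _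
      refine ⟨z, ?_, hzt, hzy⟩
      have hzdist : dist z t < η := by
        rw [Real.dist_eq, abs_of_pos (by linarith : (0:ℝ) < z - t)]
        have := min_le_left (t + η / 2) yv
        rw [hzdef]
        linarith [min_le_left (t + η / 2) yv]
      have hρFz : ρ' (F z) ≤ (1 + δ) * ρ' (F t) := (hball hzdist).le
      have hFzge : F t ≤ F z := hFmono hzt.le
      have hFzpos : 0 < F z := lt_of_lt_of_le hFt hFzge
      have hstep1 : Grho ρ (F z) - Grho ρ (F t) ≤ (F z - F t) * (1 / ρ (F t)) :=
        hGle (F t) (F z) hFt hFzge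
      have hstep2 : F z - F t ≤ (d:ℝ) * ((z - t) * ρ' (F z)) :=
        hslope t z (le_trans ha hta) hzt.le
      have hρFt : ρ' (F t) = ρ (F t) := hρ'eq _ hFt.le
      have hρFtpos : 0 < ρ (F t) := hρpos _ hFt
      have hchain : Grho ρ (F z) - Grho ρ (F t) ≤ (d:ℝ) * (1 + δ) * (z - t) := by
        have h3 : (F z - F t) * (1 / ρ (F t)) ≤
            ((d:ℝ) * ((z - t) * ρ' (F z))) * (1 / ρ (F t)) :=
          mul_le_mul_of_nonneg_right hstep2 (by positivity)
        have h4 : ρ' (F z) ≤ (1 + δ) * ρ (F t) := by rw [← hρFt]; exact hρFz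
        have h5 : (d:ℝ) * ((z - t) * ρ' (F z)) * (1 / ρ (F t)) ≤
            (d:ℝ) * ((z - t) * ((1 + δ) * ρ (F t))) * (1 / ρ (F t)) := by
          apply mul_le_mul_of_nonneg_right ?_ (by positivity)
          apply mul_le_mul_of_nonneg_left
            (mul_le_mul_of_nonneg_left h4 (by linarith : (0:ℝ) ≤ z - t)) hdpos.le
        have h6 : (d:ℝ) * ((z - t) * ((1 + δ) * ρ (F t))) * (1 / ρ (F t)) =
            (d:ℝ) * (1 + δ) * (z - t) := by
          field_simp
        linarith
      simp only [hSdef, mem_setOf_eq] at htS ⊢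
      have hsplit : (d:ℝ) * (1 + δ) * (z - a) =
          (d:ℝ) * (1 + δ) * (t - a) + (d:ℝ) * (1 + δ) * (z - t) := by ring
      linarith
    exact fun t ht => hsub ht
  -- main bound : F t ≤ B on [0, T]
  have hFB : ∀ t, t ∈ Icc (0:ℝ) T → F t ≤ B := by
    rcases hr0nonneg.lt_or_eq with hr0pos | hr0zero
    · -- r0 > 0
      intro t ht
      have hFr0 : r0 ≤ F t := by
        have := hFmono ht.1
        rwa [hF0] at this
      have hF0t : 0 < F t := lt_of_lt_of_le hr0pos hFr0
      have hGFt : Grho ρ (F t) ≤ Grho ρ r0 + (d:ℝ) * t := by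
        by_contra hc
        push_neg at hc
        set δ0 : ℝ := (Grho ρ (F t) - (Grho ρ r0 + (d:ℝ) * t)) / (2 * ((d:ℝ) * T + 1))
          with hδ0def
        have hδ0pos : 0 < δ0 := div_pos (by linarith) (by linarith)
        have hcore := core 0 T δ0 le_rfl hT.le hδ0pos (by rw [hF0]; exact hr0pos) t ht
        rw [hF0] at hcore
        have h1 : (d:ℝ) * (1 + δ0) * (t - 0) ≤ (d:ℝ) * t + ((d:ℝ) * T + 1) * δ0 := by
          have ht0 : 0 ≤ t := ht.1
          have htT : t ≤ T := ht.2
          have hdtT : (d:ℝ) * t ≤ (d:ℝ) * T + 1 := by nlinarith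
          have hmul := mul_le_mul_of_nonneg_right hdtT hδ0pos.le
          nlinarith
        have h2 : ((d:ℝ) * T + 1) * δ0 =
            (Grho ρ (F t) - (Grho ρ r0 + (d:ℝ) * t)) / 2 := by
          rw [hδ0def]
          field_simp
        linarith
      have hGs0 : Grho ρ (F t) ≤ s0 := by
        have hmul : (d:ℝ) * t ≤ (d:ℝ) * T := mul_le_mul_of_nonneg_left ht.2 hdpos.le
        rw [hs0def]
        linarith
      rw [hBdef]
      exact hInv_lb s0 (F t) hF0t hGs0
    · -- r0 = 0 : Osgood uniqueness forces F ≡ 0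
      have hFTz : F T = 0 := by
        by_contra hne
        have hF0z : F 0 = 0 := by rw [hF0, ← hr0zero]
        have hFTpos : 0 < F T := by
          have := hFmono hT.le
          rw [hF0z] at this
          exact lt_of_le_of_ne this (Ne.symm hne)
        set U : Set ℝ := {t | t ∈ Icc (0:ℝ) T ∧ F t = 0} with hUdef
        have hUne : (0:ℝ) ∈ U := ⟨⟨le_rfl, hT.le⟩, hF0z⟩
        have hUbdd : BddAbove U := ⟨T, fun u hu => hu.1.2⟩
        have hUclosed : IsClosed U := by
          have : U = Icc 0 T ∩ F ⁻¹' {0} := by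
            ext u
            simp [hUdef, mem_inter_iff, mem_preimage, and_comm]
          rw [this]
          exact isClosed_Icc.inter (isClosed_singleton.preimage hFcont)
        set t0 : ℝ := sSup U with ht0def
        have ht0U : t0 ∈ U := hUclosed.csSup_mem ⟨0, hUne⟩ hUbdd
        have ht00 : 0 ≤ t0 := ht0U.1.1
        have ht0T : t0 < T := by
          rcases lt_or_eq_of_le ht0U.1.2 with hlt | heqT
          · exact hlt
          · exfalso
            rw [heqT] at ht0U
            exact hne ht0U.2
        have hFpos' : ∀ s, t0 < s → 0 < F s := by
          intro s hs
          rcases le_or_gt s T with hsT | hsT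
          · have h0 : F t0 ≤ F s := hFmono hs.le
            rw [ht0U.2] at h0
            rcases h0.lt_or_eq with hlt | heqF
            · exact hlt
            · exfalso
              have hsU : s ∈ U := ⟨⟨le_trans ht00 hs.le, hsT⟩, heqF.symm⟩
              exact absurd (le_csSup hUbdd hsU) (not_le.mpr hs)
          · exact lt_of_lt_of_le hFTpos (hFmono hsT.le)
        have hbound : ∀ s, t0 < s → s ≤ T →
            Grho ρ (F T) - 2 * (d:ℝ) * T ≤ Grho ρ (F s) := by
          intro s hs hsT
          have hcore := core s T 1 (le_trans ht00 hs.le) hsT one_pos (hFpos' s hs) T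
            ⟨hsT, le_rfl⟩
          have h2 : (d:ℝ) * (1 + 1) * (T - s) ≤ 2 * (d:ℝ) * T := by
            have hs0 : 0 ≤ s := le_trans ht00 hs.le
            nlinarith
          linarith
        have hFt0 : Tendsto F (nhdsWithin t0 (Ioi t0)) (nhdsWithin 0 (Ioi 0)) := by
          apply tendsto_nhdsWithin_of_tendsto_nhds_of_eventually_within
          · have hcont := hFcont.continuousAt (x := t0)
            rw [ContinuousAt, ht0U.2] at hcont
            exact hcont.mono_left nhdsWithin_le_nhds
          · exact eventually_nhdsWithin_of_forall fun s hs => hFpos' s hs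
        have hcomp : Tendsto (fun s => ∫ u in (F s)..(1:ℝ), 1 / ρ u)
            (nhdsWithin t0 (Ioi t0)) atTop := hOsgood.comp hFt0
        obtain ⟨s, hs1, hs2, hs3⟩ :=
          ((hcomp.eventually_gt_atTop (2 * (d:ℝ) * T - Grho ρ (F T))).and
            (((eventually_lt_nhds ht0T).filter_mono nhdsWithin_le_nhds).and
              self_mem_nhdsWithin)).exists
        have hst0 : t0 < s := hs3
        have hbnd := hbound s hst0 hs2.le
        have hGexp : Grho ρ (F s) = - ∫ u in (F s)..(1:ℝ), 1 / ρ u := by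
          rw [Grho, intervalIntegral.integral_symm]
        rw [hGexp] at hbnd
        linarith
      intro t ht
      have hle : F t ≤ F T := hFmono ht.2
      rw [hFTz] at hle
      exact le_trans hle hBnonneg
  -- conclusion
  have hhB : ∀ s ∈ Icc (0:ℝ) T, h s ≤ ρ B := by
    intro s hs
    have h1 : f s ≤ F s := hfF s hs.1
    have h2 : F s ≤ B := hFB s hs
    calc h s = ρ' (f s) := by rw [hhdef]
      _ ≤ ρ' B := hρ'mono (le_trans h1 h2)
      _ = ρ B := hρ'eq B hBnonneg
  have hintB : (∫ s in (0:ℝ)..T, h s) ≤ T * ρ B := by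
    calc (∫ s in (0:ℝ)..T, h s) ≤ ∫ _s in (0:ℝ)..T, ρ B :=
          intervalIntegral.integral_mono_on hT.le (hhint 0 T) intervalIntegrable_const hhB
      _ = T * ρ B := by simp [smul_eq_mul]
  have hκS : κ * (∑ j, ℓ j (min T (τ j))) ≤ GamRho ρ ((d:ℝ) * T) r0 := by
    have h1 := hkey' T hT.le
    have h2 : F T ≤ r0 + ((d:ℝ) * T) * ρ B := by
      simp only [hFdef]
      have h3 := mul_le_mul_of_nonneg_left hintB hdpos.le
      nlinarith
    have h3 : 0 ≤ f T := hfnonneg T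
    rw [hΓeq]
    linarith
  have hSm : (∑ j, ℓ j (min T (τ j))) ≤ m := by
    have hΓm : GamRho ρ ((d:ℝ) * T) r0 = κ * m := by
      rw [hκ]
      field_simp
    rw [hΓm] at hκS
    exact le_of_mul_le_mul_left hκS hκpos
  refine ⟨hSm, ?_⟩
  intro j
  have h1 : ℓ j (min T (τ j)) ≤ ∑ i, ℓ i (min T (τ i)) :=
    Finset.single_le_sum (fun i _ => hℓnonneg i _ (le_min hT.le (hτ i))) (Finset.mem_univ j)
  have h2 : ℓ j (min T (τ j)) ≤ ℓ j (ε * T) := le_trans h1 (le_trans hSm (hmle j))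
  have h3 : min T (τ j) ≤ ε * T :=
    ((hℓstrict j).le_iff_le (mem_Ici.mpr (le_min hT.le (hτ j)))
      (mem_Ici.mpr hεT.le)).mp h2
  by_contra hc
  push_neg at hc
  rw [min_eq_left hc.le] at h3
  nlinarith
end

section
/- Let (P_t) be a Markov semigroup on bounded measurable functions on ℝ^d such that for all T > 0, x, y ∈ ℝ^d, and strictly positive bounded measurable f: P_T log f(y) ≤ log P_T f(x) + (C_T/2)‖x - y‖₁² for a constant C_T independent of x, y (the log-Harnack inequality with quadratic cost). Assume moreover P_T f is differentiable. Then the gradient estimate |∇P_T f(x)|² ≤ C_T (P_T f²(x) - (P_T f(x))²) holds for all bounded measurable f, where |∇P_T f(x)| = limsup_{y→x} |P_T f(x) - P_T f(y)|/‖x-y‖₁. -/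
open Set MeasureTheory Filter Topology

private lemma log_quad (t : ℝ) (ht : |t| ≤ 1/2) :
    |Real.log (1 + t) - (t - t^2/2)| ≤ 2 * |t|^3 := by
  have h1 : |(-t)| < 1 := by rw [abs_neg]; linarith [abs_nonneg t]
  have h := Real.abs_log_sub_add_sum_range_le h1 2
  have hsum : (∑ i ∈ Finset.range 2, (-t) ^ (i + 1) / (i + 1)) = -t + t^2/2 := by
    rw [Finset.sum_range_succ, Finset.sum_range_one]
    norm_num
  rw [hsum] at h
  have h2 : (1:ℝ) - -t = 1 + t := by ring
  rw [h2, abs_neg] at h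
  have h4 : (-t + t ^ 2 / 2) + Real.log (1 + t) = Real.log (1 + t) - (t - t^2/2) := by ring
  rw [h4] at h
  have h5 : |t| ^ (2+1) / (1 - |t|) ≤ 2 * |t| ^ 3 := by
    show |t| ^ 3 / (1 - |t|) ≤ 2 * |t| ^ 3
    rw [div_le_iff₀ (by linarith : (0:ℝ) < 1 - |t|)]
    nlinarith [mul_nonneg (pow_nonneg (abs_nonneg t) 3) (by linarith : (0:ℝ) ≤ 1 - 2*|t|)]
  exact h.trans h5

set_option maxHeartbeats 1000000 in
/-- log-Harnack inequality with quadratic cost implies the variance-type gradient estimate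
`|∇P_T f(x)|² ≤ C_T (P_T f²(x) - (P_T f(x))²)`. -/
theorem logHarnack_implies_gradient_estimate (d : ℕ)
    (P : ℝ → ((Fin d → ℝ) → ℝ) → ((Fin d → ℝ) → ℝ)) (C : ℝ → ℝ)
    (hlin : ∀ T > (0:ℝ), ∀ (a : ℝ) (f g : (Fin d → ℝ) → ℝ),
      Measurable f → Measurable g → (∃ M, ∀ x, |f x| ≤ M) → (∃ M, ∀ x, |g x| ≤ M) →
      P T (fun x => a * f x + g x) = fun x => a * P T f x + P T g x)
    (hmonot : ∀ T > (0:ℝ), ∀ f g : (Fin d → ℝ) → ℝ,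
      Measurable f → Measurable g → (∃ M, ∀ x, |f x| ≤ M) → (∃ M, ∀ x, |g x| ≤ M) →
      (∀ x, f x ≤ g x) → ∀ x, P T f x ≤ P T g x)
    (hconst : ∀ T > (0:ℝ), ∀ c : ℝ, P T (fun _ => c) = fun _ => c)
    (hLH : ∀ T > (0:ℝ), ∀ f : (Fin d → ℝ) → ℝ,
      Measurable f → (∃ M, ∀ x, |f x| ≤ M) → (∀ x, 0 < f x) →
      ∀ x y : Fin d → ℝ,
        P T (fun z => Real.log (f z)) y ≤
          Real.log (P T f x) + C T / 2 * (∑ j, |x j - y j|) ^ 2)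
    (T : ℝ) (hT : 0 < T)
    (f : (Fin d → ℝ) → ℝ) (hf : Measurable f) (hfb : ∃ M, ∀ x, |f x| ≤ M)
    (hdiff : Differentiable ℝ (P T f)) :
    ∀ x : Fin d → ℝ,
      (Filter.limsup (fun y => |P T f x - P T f y| / ∑ j, |x j - y j|)
          (nhdsWithin x {x}ᶜ)) ^ 2 ≤
        C T * (P T (fun z => f z ^ 2) x - (P T f x) ^ 2) := by
  intro x
  obtain ⟨M, hM⟩ := hfb
  have hM0 : 0 ≤ M := le_trans (abs_nonneg _) (hM x)
  rcases Nat.eq_zero_or_pos d with hd | hd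
  · -- degenerate case d = 0 : the space is a single point
    subst hd
    have hcomp : ({x}ᶜ : Set (Fin 0 → ℝ)) = ∅ := by
      ext y; simp [Subsingleton.elim y x]
    rw [hcomp, nhdsWithin_empty]
    have hls : Filter.limsup
        (fun y : Fin 0 → ℝ => |P T f x - P T f y| / ∑ j, |x j - y j|) ⊥ = 0 := by
      rw [Filter.limsup_eq]
      have he : {a : ℝ | ∀ᶠ n in (⊥ : Filter (Fin 0 → ℝ)),
          (fun y => |P T f x - P T f y| / ∑ j, |x j - y j|) n ≤ a} = Set.univ := by
        ext a; simp
      rw [he]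
      exact Real.sInf_of_not_bddBelow not_bddBelow_univ
    rw [hls]
    have h1 : (fun z : Fin 0 → ℝ => f z ^ 2) = fun _ => f x ^ 2 :=
      funext fun z => by rw [Subsingleton.elim z x]
    have e1 : P T (fun z : Fin 0 → ℝ => f z ^ 2) x = f x ^ 2 := by
      rw [h1, hconst T hT]
    have e2 : P T f x = f x := by
      have h2' : f = fun _ => f x := funext fun z => by rw [Subsingleton.elim z x]
      conv_lhs => rw [h2', hconst T hT]
    rw [e1, e2]
    norm_num
  · -- main case d ≥ 1
    haveI : Nonempty (Fin d) := ⟨⟨0, hd⟩⟩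
    haveI : Nontrivial (Fin d → ℝ) := by
      refine ⟨fun _ => 0, fun _ => 1, fun h => ?_⟩
      have := congrFun h ⟨0, hd⟩
      norm_num at this
    haveI hne : (nhdsWithin x {x}ᶜ).NeBot := Module.punctured_nhds_neBot ℝ (Fin d → ℝ) x
    set c := P T f x with hc
    set V := P T (fun z => f z ^ 2) x - c ^ 2 with hVdef
    set M1 := M + |c| + 1 with hM1def
    have hM1 : 1 ≤ M1 := by
      have := abs_nonneg c; rw [hM1def]; linarith
    have hM1pos : 0 < M1 := by linarith
    set K := 4 * M1 ^ 3 with hKdef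
    have hKpos : 0 < K := by rw [hKdef]; positivity
    set ε₀ := 1 / (2 * M1) with hε₀def
    have hε₀pos : 0 < ε₀ := by rw [hε₀def]; positivity
    clear_value c V M1 K ε₀
    -- basic facts
    have hf2 : Measurable fun z : Fin d → ℝ => f z ^ 2 := hf.pow_const 2
    have hf2b : ∀ z, |f z ^ 2| ≤ M ^ 2 := fun z => by
      rw [abs_pow]
      exact pow_le_pow_left₀ (abs_nonneg _) (hM z) 2
    have hPbound : ∀ (u : (Fin d → ℝ) → ℝ) (Mu : ℝ), Measurable u → (∀ z, |u z| ≤ Mu) →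
        ∀ w, |P T u w| ≤ Mu := by
      intro u Mu hu hub w
      have hMu0 : 0 ≤ Mu := le_trans (abs_nonneg _) (hub w)
      have hcb : ∀ z : Fin d → ℝ, |(fun _ : Fin d → ℝ => Mu) z| ≤ Mu := fun z => by
        simp [abs_of_nonneg hMu0]
      have hcb' : ∀ z : Fin d → ℝ, |(fun _ : Fin d → ℝ => -Mu) z| ≤ Mu := fun z => by
        simp [abs_of_nonneg hMu0]
      have hA := hmonot T hT u (fun _ => Mu) hu measurable_const ⟨Mu, hub⟩ ⟨Mu, hcb⟩
        (fun z => (abs_le.1 (hub z)).2) w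
      have hB := hmonot T hT (fun _ => -Mu) u measurable_const hu ⟨Mu, hcb'⟩ ⟨Mu, hub⟩
        (fun z => (abs_le.1 (hub z)).1) w
      simp only [hconst T hT] at hA hB
      exact abs_le.2 ⟨hB, hA⟩
    have haffb : ∀ A B K0 : ℝ, ∀ z, |A * f z + (B * f z ^ 2 + K0)|
        ≤ |A| * M + (|B| * M ^ 2 + |K0|) := by
      intro A B K0 z
      calc |A * f z + (B * f z ^ 2 + K0)| ≤ |A * f z| + (|B * f z ^ 2| + |K0|) := by
            refine (abs_add_le _ _).trans ?_
            gcongr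
            exact abs_add_le _ _
        _ = |A| * |f z| + (|B| * |f z ^ 2| + |K0|) := by rw [abs_mul, abs_mul]
        _ ≤ |A| * M + (|B| * M ^ 2 + |K0|) := by
            gcongr
            · exact hM z
            · exact hf2b z
    have haffmeas : ∀ A B K0 : ℝ, Measurable fun z => A * f z + (B * f z ^ 2 + K0) :=
      fun A B K0 => (hf.const_mul A).add ((hf2.const_mul B).add_const K0)
    have hPaff : ∀ A B K0 : ℝ, ∀ w,
        P T (fun z => A * f z + (B * f z ^ 2 + K0)) w
          = A * P T f w + (B * P T (fun z => f z ^ 2) w + K0) := by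
      intro A B K0 w
      have hb1 : ∃ Mb, ∀ z : Fin d → ℝ, |B * f z ^ 2 + K0| ≤ Mb := by
        refine ⟨|B| * M ^ 2 + |K0|, fun z => ?_⟩
        calc |B * f z ^ 2 + K0| ≤ |B * f z ^ 2| + |K0| := abs_add_le _ _
          _ = |B| * |f z ^ 2| + |K0| := by rw [abs_mul]
          _ ≤ |B| * M ^ 2 + |K0| := by gcongr; exact hf2b z
      have hinner : P T (fun z => B * f z ^ 2 + K0)
          = fun w => B * P T (fun z => f z ^ 2) w + K0 := by
        have h0 : P T (fun z => B * f z ^ 2 + K0)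
            = fun w => B * P T (fun z => f z ^ 2) w + P T (fun _ => K0) w :=
          hlin T hT B (fun z => f z ^ 2) (fun _ => K0) hf2 measurable_const
            ⟨M ^ 2, hf2b⟩ ⟨|K0|, fun _ => le_rfl⟩
        rw [hconst T hT] at h0
        exact h0
      have houter : P T (fun z => A * f z + (B * f z ^ 2 + K0))
          = fun w => A * P T f w + P T (fun z => B * f z ^ 2 + K0) w :=
        hlin T hT A f (fun z => B * f z ^ 2 + K0) hf ((hf2.const_mul B).add_const K0)
          ⟨M, hM⟩ hb1
      rw [houter, hinner]
    -- the key pointwise inequality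
    have star : ∀ ε : ℝ, 0 < ε → ε ≤ ε₀ → ∀ y : Fin d → ℝ,
        ε * |c - P T f y| ≤ ε ^ 2 * V / 2 + K * ε ^ 3
          + C T / 2 * (∑ j, |x j - y j|) ^ 2 := by
      intro ε hε hεle y
      have hεM1 : ε * M1 ≤ 1 / 2 := by
        have hEq : ε₀ * M1 = 1/2 := by rw [hε₀def]; field_simp
        have := mul_le_mul_of_nonneg_right hεle hM1pos.le
        linarith
      have key : ∀ σ : ℝ, σ = 1 ∨ σ = -1 →
          ε * (σ * (c - P T f y)) ≤ ε ^ 2 * V / 2 + K * ε ^ 3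
            + C T / 2 * (∑ j, |x j - y j|) ^ 2 := by
        intro σ hσ
        have hσ2 : σ ^ 2 = 1 := by rcases hσ with h | h <;> rw [h] <;> norm_num
        have hσabs : |σ| = 1 := by rcases hσ with h | h <;> rw [h] <;> norm_num
        set a : ℝ := ε * σ with ha
        set k0 : ℝ := 1 - ε * σ * c with hk0
        have hFmeas : Measurable fun z : Fin d → ℝ => a * f z + k0 :=
          (hf.const_mul a).add_const k0
        have hfc : ∀ z, |f z - c| ≤ M1 := by
          intro z
          have h1 : |f z - c| ≤ |f z| + |c| := by
            have := abs_add_le (f z) (-c)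
            simpa [sub_eq_add_neg] using this
          have := hM z
          rw [hM1def]; linarith
        have htz : ∀ z, |a * f z + k0 - 1| ≤ ε * M1 := by
          intro z
          have he : a * f z + k0 - 1 = ε * σ * (f z - c) := by rw [ha, hk0]; ring
          rw [he, abs_mul, abs_mul, hσabs, abs_of_pos hε, mul_one]
          exact mul_le_mul_of_nonneg_left (hfc z) hε.le
        have hεhalf : ∀ z, |a * f z + k0 - 1| ≤ 1/2 := fun z => (htz z).trans hεM1
        have hFpos : ∀ z, 0 < a * f z + k0 := by
          intro z
          have := (abs_le.1 (hεhalf z)).1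
          linarith
        have hFb : ∀ z, |a * f z + k0| ≤ 2 := by
          intro z
          have h1 := (abs_le.1 (hεhalf z)).1
          have h2 := (abs_le.1 (hεhalf z)).2
          rw [abs_le]; constructor <;> linarith
        have hLH0 := hLH T hT (fun z => a * f z + k0) hFmeas ⟨2, hFb⟩ hFpos y x
        have hsymm : (∑ j, |y j - x j|) = ∑ j, |x j - y j| :=
          Finset.sum_congr rfl fun j _ => abs_sub_comm _ _
        rw [hsymm] at hLH0
        -- lower bound for P (log F) at x
        have hGle : ∀ z, (a + ε^2*c) * f z
            + ((-(ε^2)/2) * f z ^ 2 + (-(a*c) - ε^2*c^2/2 - K/2*ε^3))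
            ≤ Real.log (a * f z + k0) := by
          intro z
          have hlog := log_quad (a * f z + k0 - 1) (hεhalf z)
          have h1t : 1 + (a * f z + k0 - 1) = a * f z + k0 := by ring
          rw [h1t] at hlog
          have hlow := (abs_le.1 hlog).1
          have habs3 : |a * f z + k0 - 1| ^ 3 ≤ (ε*M1) ^ 3 :=
            pow_le_pow_left₀ (abs_nonneg _) (htz z) 3
          have hGz : (a + ε^2*c) * f z
              + ((-(ε^2)/2) * f z ^ 2 + (-(a*c) - ε^2*c^2/2 - K/2*ε^3))
              = (a * f z + k0 - 1) - (a * f z + k0 - 1)^2/2 - K/2*ε^3 := by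
            rw [ha, hk0, hKdef]
            linear_combination (ε^2 * (f z - c)^2 / 2) * hσ2
          rw [hGz]
          have hKe : 2 * |a * f z + k0 - 1| ^ 3 ≤ K/2*ε^3 := by
            rw [hKdef]
            calc 2 * |a * f z + k0 - 1| ^ 3 ≤ 2 * (ε*M1)^3 := by linarith
              _ = 4 * M1^3 / 2 * ε^3 := by ring
          linarith
        have hlogmeas : Measurable fun z : Fin d → ℝ => Real.log (a * f z + k0) :=
          Real.measurable_log.comp hFmeas
        have hlog2le1 : Real.log 2 ≤ 1 := by
          have := Real.log_le_sub_one_of_pos (by norm_num : (0:ℝ) < 2)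
          linarith
        have hlogb : ∀ z, |Real.log (a * f z + k0)| ≤ 1 := by
          intro z
          have hp := hFpos z
          have h1 := (abs_le.1 (hεhalf z)).1
          have h2 := (abs_le.1 (hεhalf z)).2
          rw [abs_le]
          constructor
          · have h12 : (1:ℝ)/2 ≤ a * f z + k0 := by linarith
            have hmono := Real.log_le_log (by norm_num : (0:ℝ) < 1/2) h12
            have hl2 : Real.log (1/2) = -Real.log 2 := by
              rw [one_div, Real.log_inv]
            linarith
          · have := Real.log_le_sub_one_of_pos hp
            linarith
        have hmono := hmonot T hT
          (fun z => (a + ε^2*c) * f z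
            + ((-(ε^2)/2) * f z ^ 2 + (-(a*c) - ε^2*c^2/2 - K/2*ε^3)))
          (fun z => Real.log (a * f z + k0))
          (haffmeas _ _ _) hlogmeas
          ⟨|a + ε^2*c| * M + (|(-(ε^2)/2)| * M ^ 2 + |(-(a*c) - ε^2*c^2/2 - K/2*ε^3)|),
            haffb _ _ _⟩
          ⟨1, hlogb⟩ hGle x
        have hPG : P T (fun z => (a + ε^2*c) * f z
            + ((-(ε^2)/2) * f z ^ 2 + (-(a*c) - ε^2*c^2/2 - K/2*ε^3))) x
            = -(ε^2*V)/2 - K/2*ε^3 := by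
          rw [hPaff]
          have hP2 : P T (fun z => f z ^ 2) x = V + c^2 := by rw [hVdef]; ring
          rw [hP2, ← hc]
          ring
        -- upper bound : compute P_T F at y
        have hPF : P T (fun z => a * f z + k0) = fun w => a * P T f w + k0 := by
          have h0 : P T (fun z => a * f z + k0)
              = fun w => a * P T f w + P T (fun _ => k0) w :=
            hlin T hT a f (fun _ => k0) hf measurable_const ⟨M, hM⟩ ⟨|k0|, fun _ => le_rfl⟩
          rw [hconst T hT] at h0
          exact h0
        have hPFy : P T (fun z => a * f z + k0) y = 1 + ε*σ*(P T f y - c) := by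
          rw [hPF]
          show a * P T f y + k0 = 1 + ε*σ*(P T f y - c)
          rw [ha, hk0]; ring
        have hPfy : |P T f y| ≤ M := hPbound f M hf hM y
        have hPfc : |P T f y - c| ≤ M1 := by
          have h1 : |P T f y - c| ≤ |P T f y| + |c| := by
            have := abs_add_le (P T f y) (-c)
            simpa [sub_eq_add_neg] using this
          rw [hM1def]; linarith
        have ht'M : |ε*σ*(P T f y - c)| ≤ ε * M1 := by
          rw [abs_mul, abs_mul, hσabs, abs_of_pos hε, mul_one]
          exact mul_le_mul_of_nonneg_left hPfc hε.le
        have ht' : |ε*σ*(P T f y - c)| ≤ 1/2 := ht'M.trans hεM1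
        have hlogup : Real.log (1 + ε*σ*(P T f y - c))
            ≤ ε*σ*(P T f y - c) + K/2*ε^3 := by
          have hlog := log_quad _ ht'
          have hup := (abs_le.1 hlog).2
          have habs3 : |ε*σ*(P T f y - c)| ^ 3 ≤ (ε*M1) ^ 3 :=
            pow_le_pow_left₀ (abs_nonneg _) ht'M 3
          have hsq : 0 ≤ (ε*σ*(P T f y - c))^2 := sq_nonneg _
          have hKe : 2 * |ε*σ*(P T f y - c)| ^ 3 ≤ K/2*ε^3 := by
            rw [hKdef]
            calc 2 * |ε*σ*(P T f y - c)| ^ 3 ≤ 2 * (ε*M1)^3 := by linarith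
              _ = 4 * M1^3 / 2 * ε^3 := by ring
          linarith
        -- chain everything
        have hchain : -(ε^2*V)/2 - K/2*ε^3
            ≤ ε*σ*(P T f y - c) + K/2*ε^3 + C T/2 * (∑ j, |x j - y j|)^2 := by
          calc -(ε^2*V)/2 - K/2*ε^3
              = P T (fun z => (a + ε^2*c) * f z
                + ((-(ε^2)/2) * f z ^ 2 + (-(a*c) - ε^2*c^2/2 - K/2*ε^3))) x := hPG.symm
            _ ≤ P T (fun z => Real.log (a * f z + k0)) x := hmono
            _ ≤ Real.log (P T (fun z => a * f z + k0) y)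
                + C T/2 * (∑ j, |x j - y j|)^2 := hLH0
            _ ≤ ε*σ*(P T f y - c) + K/2*ε^3 + C T/2 * (∑ j, |x j - y j|)^2 := by
                rw [hPFy]
                linarith
        have hflip : ε * (σ * (c - P T f y)) = -(ε*σ*(P T f y - c)) := by ring
        rw [hflip]
        linarith
      rcases abs_cases (c - P T f y) with ⟨h1, _⟩ | ⟨h1, _⟩
      · rw [h1]
        have := key 1 (Or.inl rfl)
        linarith
      · rw [h1]
        have := key (-1) (Or.inr rfl)
        linarith
    -- variance is nonnegative
    have hV0 : 0 ≤ V := by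
      by_contra hneg
      push_neg at hneg
      have hεm : 0 < min ε₀ (-V/(4*K)) :=
        lt_min hε₀pos (div_pos (by linarith) (by linarith))
      have h := star (min ε₀ (-V/(4*K))) hεm (min_le_left _ _) x
      have hsum0 : (∑ j, |x j - x j|) = (0:ℝ) := by simp
      rw [hsum0] at h
      set ε := min ε₀ (-V/(4*K)) with hεdef
      clear_value ε
      have hcc : |c - P T f x| = 0 := by rw [← hc]; simp
      rw [hcc] at h
      have hKε : K * ε ≤ -V/4 := by
        have h2 : ε ≤ -V/(4*K) := by rw [hεdef]; exact min_le_right _ _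
        calc K * ε ≤ K * (-V/(4*K)) := by
              exact mul_le_mul_of_nonneg_left h2 hKpos.le
          _ = -V/4 := by field_simp
      have hεsq : 0 < ε^2 := pow_pos hεm 2
      nlinarith [mul_le_mul_of_nonneg_right hKε (le_of_lt hεsq), h, hεsq, hneg]
    -- the distance function
    have hρcont : Filter.Tendsto (fun y : Fin d → ℝ => ∑ j, |x j - y j|)
        (nhdsWithin x {x}ᶜ) (𝓝 0) := by
      have hcont : Continuous fun y : Fin d → ℝ => ∑ j, |x j - y j| := by
        apply continuous_finset_sum
        intro j _
        exact (continuous_const.sub (continuous_apply j)).abs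
      have h0 : (∑ j, |x j - x j|) = (0:ℝ) := by simp
      have ht := hcont.tendsto x
      rw [h0] at ht
      exact ht.mono_left nhdsWithin_le_nhds
    have hρpos : ∀ᶠ y in nhdsWithin x {x}ᶜ, 0 < ∑ j, |x j - y j| := by
      filter_upwards [self_mem_nhdsWithin] with y hy
      have hyx : y ≠ x := hy
      have : ∃ j, x j ≠ y j := by
        by_contra hno
        push_neg at hno
        exact hyx (funext fun j => (hno j).symm)
      obtain ⟨j, hj⟩ := this
      exact Finset.sum_pos' (fun i _ => abs_nonneg _)
        ⟨j, Finset.mem_univ j, abs_pos.2 (sub_ne_zero.2 hj)⟩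
    have hquotnn : ∀ y, 0 ≤ |c - P T f y| / ∑ j, |x j - y j| := fun y =>
      div_nonneg (abs_nonneg _) (Finset.sum_nonneg fun j _ => abs_nonneg _)
    -- the eventual bound
    have hev : ∀ s : ℝ, 0 < s → ∀ δ : ℝ, 0 < δ →
        ∀ᶠ y in nhdsWithin x {x}ᶜ,
          |c - P T f y| / ∑ j, |x j - y j| ≤ s*V/2 + C T/(2*s) + δ := by
      intro s hs δ hδ
      have hKs2 : (0:ℝ) < K*s^2+1 := by nlinarith [hKpos, sq_nonneg s]
      have hr : (0:ℝ) < min (ε₀/s) (δ/(K*s^2+1)) :=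
        lt_min (div_pos hε₀pos hs) (div_pos hδ hKs2)
      filter_upwards [hρcont.eventually_lt_const hr, hρpos] with y hy1 hy2
      set S := ∑ j, |x j - y j| with hS
      clear_value S
      have hsS : 0 < s * S := mul_pos hs hy2
      have hεle : s * S ≤ ε₀ := by
        have h2 : S < ε₀/s := lt_of_lt_of_le hy1 (min_le_left _ _)
        rw [lt_div_iff₀ hs] at h2
        linarith [h2]
      have h1 := star (s*S) hsS hεle y
      rw [← hS] at h1
      rw [div_le_iff₀ hy2]
      have hcs : s * (C T/(2*s)) = C T/2 := by field_simp
      have hKs : K * s^2 * S ≤ δ := by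
        have h2 : S ≤ δ/(K*s^2+1) := le_of_lt (lt_of_lt_of_le hy1 (min_le_right _ _))
        rw [le_div_iff₀ hKs2] at h2
        nlinarith [hy2.le]
      rw [← mul_le_mul_iff_right₀ hsS]
      refine h1.trans ?_
      have hexp : s*S*((s*V/2 + C T/(2*s) + δ)*S)
          = (s*S)^2*V/2 + (s*(C T/(2*s)))*S^2 + δ*(s*S^2) := by ring
      rw [hexp, hcs]
      nlinarith [mul_le_mul_of_nonneg_right hKs (mul_nonneg hs.le (sq_nonneg S))]
    set L := Filter.limsup (fun y => |c - P T f y| / ∑ j, |x j - y j|)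
      (nhdsWithin x {x}ᶜ) with hL
    clear_value L
    have hbdd : IsBoundedUnder (· ≤ ·) (nhdsWithin x {x}ᶜ)
        (fun y => |c - P T f y| / ∑ j, |x j - y j|) := by
      refine ⟨1*V/2 + C T/(2*1) + 1, ?_⟩
      rw [Filter.eventually_map]
      exact hev 1 one_pos 1 one_pos
    have hcob : IsCoboundedUnder (· ≤ ·) (nhdsWithin x {x}ᶜ)
        (fun y => |c - P T f y| / ∑ j, |x j - y j|) :=
      Filter.isCoboundedUnder_le_of_le _ (fun y => hquotnn y)
    have hL0 : 0 ≤ L := by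
      rw [hL]
      exact Filter.le_limsup_of_frequently_le
        ((Filter.Eventually.of_forall hquotnn).frequently) hbdd
    have keyS : ∀ s : ℝ, 0 < s → L ≤ s*V/2 + C T/(2*s) := by
      intro s hs
      by_contra hcon
      push_neg at hcon
      have hδ : 0 < (L - (s*V/2 + C T/(2*s)))/2 := by linarith
      have hls := Filter.limsup_le_of_le hcob (hev s hs _ hδ)
      rw [← hL] at hls
      linarith
    -- C T is nonnegative
    have hC0 : 0 ≤ C T := by
      by_contra hC
      push_neg at hC
      have hq : 0 < -(C T)/(2*(V+1)) := div_pos (by linarith) (by linarith)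
      set s := Real.sqrt (-(C T)/(2*(V+1))) with hsdef
      have hspos : 0 < s := Real.sqrt_pos.2 hq
      have hs2 : s^2 = -(C T)/(2*(V+1)) := Real.sq_sqrt hq.le
      have h := keyS s hspos
      have hL' : 0 ≤ s*V/2 + C T/(2*s) := hL0.trans h
      have hsne : s ≠ 0 := ne_of_gt hspos
      have hcs2 : 2*s*(C T/(2*s)) = C T := by field_simp
      have h2 : 0 ≤ s^2*V + C T := by nlinarith [hL', hspos]
      have hV1 : V + 1 ≠ 0 := by linarith
      have h3 : s^2*(2*(V+1)) = -(C T) := by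
        rw [hs2]; field_simp
      nlinarith [h2, h3, hV0, hC, mul_nonneg h2 (by linarith : (0:ℝ) ≤ 2*(V+1))]
    -- conclude
    rcases eq_or_lt_of_le hL0 with hL1 | hL1
    · rw [← hL1]
      simpa using mul_nonneg hC0 hV0
    · by_cases hVz : V = 0
      · exfalso
        have hLne : L ≠ 0 := ne_of_gt hL1
        have hCL : 0 ≤ C T/(2*L) := div_nonneg hC0 (by linarith)
        have hspos : 0 < C T/(2*L) + 1 := by linarith
        have h := keyS (C T/(2*L) + 1) hspos
        rw [hVz] at h
        have hlt : C T/(2*(C T/(2*L)+1)) < L := by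
          rw [div_lt_iff₀ (by linarith : (0:ℝ) < 2*(C T/(2*L)+1))]
          have he : L * (2*(C T/(2*L)+1)) = C T + 2*L := by
            field_simp
          rw [he]
          linarith
        have h' : L ≤ C T/(2*(C T/(2*L)+1)) := by
          calc L ≤ (C T/(2*L) + 1)*0/2 + C T/(2*(C T/(2*L)+1)) := h
            _ = C T/(2*(C T/(2*L)+1)) := by ring
        linarith
      · have hVpos : 0 < V := lt_of_le_of_ne hV0 (Ne.symm hVz)
        have hVne : V ≠ 0 := ne_of_gt hVpos
        have hLne : L ≠ 0 := ne_of_gt hL1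
        have h := keyS (L/V) (div_pos hL1 hVpos)
        have e1 : (L/V)*V/2 = L/2 := by field_simp
        have e2 : C T/(2*(L/V)) = C T * V/(2*L) := by
          field_simp
        rw [e1, e2] at h
        have h2 : L/2 ≤ C T * V/(2*L) := by linarith
        rw [div_le_div_iff₀ (by norm_num) (by linarith : (0:ℝ) < 2*L)] at h2
        nlinarith [h2]
end
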